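/- arXiv:1502.07934 — 3 statements merged into one kernel-verified Lean document; each statement's English description precedes it below -/
import Mathlib

section
/- Let a < b be coprime positive integers and let c = (c_0, …, c_{a−1}) ∈ ℤ^a with c_0 + ⋯ + c_{a−1} = 0 be such that λ = core_a(c) is a b-core (hence an (a,b)-core). Set x_i = c_i + i/a − (a−1)/(2a) for 0 ≤ i ≤ a−1 and write ⌊y⌋₀ = max(0, ⌊y⌋). Then the skew length of λ satisfies sℓ(λ) = Σ_{i=0}^{a−1} Σ_{j=0}^{a−1} ( ⌊x_i − x_j⌋₀ − ⌊x_i − x_j − b/a⌋₀ ). -/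
/-- A partition, encoded by its weakly decreasing, eventually zero sequence of parts;
`parts j` is the `(j+1)`-st part `λ_{j+1}`. -/
structure PartitionSeq where
  parts : ℕ → ℕ
  antitone : ∀ ⦃i j : ℕ⦄, i ≤ j → parts j ≤ parts i
  eventually_zero : ∃ N, parts N = 0

namespace PartitionSeq

/-- The beta-set `{λ_j − j : j ≥ 1}` of a partition (with trailing zero parts included). -/
def betaSet (lam : PartitionSeq) : Set ℤ :=
  Set.range fun j : ℕ => (lam.parts j : ℤ) - (j + 1)

/-- The hook length of the cell in row `i`, column `j` (both 0-indexed): one plus the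
number of cells to its right in its row plus the number of cells below it in its column. -/
noncomputable def hook (lam : PartitionSeq) (i j : ℕ) : ℕ :=
  (lam.parts i - j) + Set.ncard {i' : ℕ | i < i' ∧ j < lam.parts i'}

/-- `lam` is an `a`-core: no cell of its Young diagram has hook length `a`. -/
def IsCore (lam : PartitionSeq) (a : ℕ) : Prop :=
  ∀ i j : ℕ, j < lam.parts i → lam.hook i j ≠ a

/-- The size `|λ| = λ₁ + λ₂ + ⋯` of a partition. -/
noncomputable def size (lam : PartitionSeq) : ℕ := ∑ᶠ j, lam.parts j

/-- The length (number of nonzero parts) of a partition. -/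
noncomputable def length (lam : PartitionSeq) : ℕ := Set.ncard {j | 0 < lam.parts j}

/-- The `(j+1)`-st part of the conjugate (transpose) partition. -/
noncomputable def conjParts (lam : PartitionSeq) (j : ℕ) : ℕ :=
  Set.ncard {i | j < lam.parts i}

/-- A partition is self-conjugate if it equals its conjugate. -/
def SelfConjugate (lam : PartitionSeq) : Prop := ∀ j, lam.parts j = lam.conjParts j

end PartitionSeq

/-- The set `B_a(c) = { −a(c_i + n) − i − 1 : 0 ≤ i ≤ a−1, n ∈ ℕ } ⊆ ℤ`. -/
def Bset (a : ℕ) (c : Fin a → ℤ) : Set ℤ :=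
  {x | ∃ (i : Fin a) (n : ℕ), x = -(a : ℤ) * (c i + n) - i.val - 1}

/-- The shifted coordinates `x_i = c_i + i/a − (a−1)/(2a)`. -/
def xcoord (a : ℕ) (c : Fin a → ℤ) (i : Fin a) : ℚ :=
  (c i : ℚ) + (i.val : ℚ) / a - ((a : ℚ) - 1) / (2 * a)

/-- Row `j` (0-indexed) of `lam` is an `a`-row: its part is maximal among the (nonzero)
parts `λ_{j'+1}` whose residue `λ_{j'+1} − (j'+1) (mod a)` agrees with that of row `j`. -/
def IsARow (a : ℕ) (lam : PartitionSeq) (j : ℕ) : Prop :=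
  0 < lam.parts j ∧ ∀ j' : ℕ, 0 < lam.parts j' →
    ((lam.parts j' : ℤ) - (j' + 1)) % a = ((lam.parts j : ℤ) - (j + 1)) % a →
    lam.parts j' ≤ lam.parts j

/-- The `(a,b)` skew length: the number of cells of `lam` lying in an `a`-row and in the
`b`-boundary (hook length `< b`). -/
noncomputable def skewLength (a b : ℕ) (lam : PartitionSeq) : ℕ :=
  Set.ncard {cell : ℕ × ℕ |
    IsARow a lam cell.1 ∧ cell.2 < lam.parts cell.1 ∧ lam.hook cell.1 cell.2 < b}

namespace Stmt13Aux


def bseq (lam : PartitionSeq) (j : ℕ) : ℤ := (lam.parts j : ℤ) - (j + 1)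

lemma bseq_strictAnti (lam : PartitionSeq) : StrictAnti (bseq lam) := by
  apply strictAnti_nat_of_succ_lt
  intro n
  have h := lam.antitone (Nat.le_succ n)
  simp only [Nat.succ_eq_add_one] at h
  unfold bseq; push_cast; omega

lemma exists_zero (lam : PartitionSeq) : ∃ N, ∀ k, N ≤ k → lam.parts k = 0 := by
  obtain ⟨N, hN⟩ := lam.eventually_zero
  exact ⟨N, fun k hk => by have := lam.antitone hk; omega⟩

noncomputable def Kf (lam : PartitionSeq) (j : ℕ) : ℕ := sInf {i | lam.parts i ≤ j}

lemma parts_Kf_le (lam : PartitionSeq) (j : ℕ) : lam.parts (Kf lam j) ≤ j := by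
  obtain ⟨N, hN⟩ := exists_zero lam
  have : {i | lam.parts i ≤ j}.Nonempty := ⟨N, by simp [hN N le_rfl]⟩
  exact Nat.sInf_mem this

lemma lt_Kf_iff (lam : PartitionSeq) {i j : ℕ} : i < Kf lam j ↔ j < lam.parts i := by
  constructor
  · intro h
    by_contra hc
    have : Kf lam j ≤ i := Nat.sInf_le (by simp only [Set.mem_setOf_eq]; omega)
    omega
  · intro h
    by_contra hc
    push_neg at hc
    have := lam.antitone hc
    have := parts_Kf_le lam j
    omega

lemma Kf_antitone (lam : PartitionSeq) {j j' : ℕ} (h : j ≤ j') : Kf lam j' ≤ Kf lam j := by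
  apply Nat.sInf_le
  have := parts_Kf_le lam j
  simp only [Set.mem_setOf_eq]
  omega

noncomputable def sig (lam : PartitionSeq) (j : ℕ) : ℤ := (j : ℤ) - Kf lam j

lemma sig_strictMono (lam : PartitionSeq) : StrictMono (sig lam) := by
  intro j j' h
  have := Kf_antitone lam (le_of_lt h)
  unfold sig; omega

lemma sig_not_mem (lam : PartitionSeq) (j : ℕ) : sig lam j ∉ Set.range (bseq lam) := by
  rintro ⟨k, hk⟩
  unfold sig bseq at hk
  rcases lt_or_ge k (Kf lam j) with h | h
  · have h1 : j < lam.parts k := (lt_Kf_iff lam).mp h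
    omega
  · have h1 : lam.parts k ≤ lam.parts (Kf lam j) := lam.antitone h
    have h2 := parts_Kf_le lam j
    omega

lemma hook_cast (lam : PartitionSeq) {r j : ℕ} (hj : j < lam.parts r) :
    ((lam.parts r - j) + (Kf lam j - r - 1) : ℤ) = bseq lam r - sig lam j := by
  have hr : r < Kf lam j := (lt_Kf_iff lam).mpr hj
  unfold bseq sig; omega


lemma count_notmem (lam : PartitionSeq) (r : ℕ) :
    {s : ℤ | s < bseq lam r ∧ s ∉ Set.range (bseq lam)}.ncard = lam.parts r := by
  classical
  obtain ⟨N0, hN0⟩ := exists_zero lam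
  set N := max N0 r with hN
  have hNr : r ≤ N := le_max_right _ _
  have hNz : lam.parts N = 0 := hN0 N (le_max_left _ _)
  have hbN : bseq lam N = -(N : ℤ) - 1 := by unfold bseq; rw [hNz]; push_cast; ring
  set I : Finset ℤ := Finset.Ico (bseq lam N) (bseq lam r) with hI
  set J : Finset ℤ := (Finset.Ioc r N).image (bseq lam) with hJ
  have hanti := bseq_strictAnti lam
  have hset : {s : ℤ | s < bseq lam r ∧ s ∉ Set.range (bseq lam)} = ↑(I \ J) := by
    ext s
    simp only [Set.mem_setOf_eq, Finset.coe_sdiff, Set.mem_diff, Finset.mem_coe,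
      Finset.mem_Ico, hI, hJ, Finset.mem_image, Finset.mem_Ioc]
    constructor
    · rintro ⟨hs1, hs2⟩
      have hsN : bseq lam N ≤ s := by
        by_contra hc
        push_neg at hc
        apply hs2
        refine ⟨(-s - 1).toNat, ?_⟩
        have h1 : (N : ℤ) ≤ -s - 1 - 1 := by omega
        have h2 : ((-s - 1).toNat : ℤ) = -s - 1 := by omega
        have h3 : N0 ≤ (-s - 1).toNat := by omega
        unfold bseq
        rw [hN0 _ h3]
        push_cast [h2]
        omega
      refine ⟨⟨hsN, hs1⟩, ?_⟩
      rintro ⟨k, _, hk⟩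
      exact hs2 ⟨k, hk⟩
    · rintro ⟨⟨hs1, hs2⟩, hs3⟩
      refine ⟨hs2, ?_⟩
      rintro ⟨k, hk⟩
      apply hs3
      refine ⟨k, ⟨?_, ?_⟩, hk⟩
      · have : bseq lam k < bseq lam r := by omega
        by_contra hc
        have := hanti.le_iff_ge.mpr (by omega : k ≤ r)
        omega
      · by_contra hc
        have := hanti (by omega : N < k)
        omega
  have hJI : J ⊆ I := by
    intro s hs
    simp only [hJ, Finset.mem_image, Finset.mem_Ioc] at hs
    obtain ⟨k, ⟨hk1, hk2⟩, hk⟩ := hs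
    simp only [hI, Finset.mem_Ico]
    constructor
    · rw [← hk]; exact hanti.antitone hk2
    · rw [← hk]; exact hanti hk1
  have hcardJ : J.card = N - r := by
    rw [hJ, Finset.card_image_of_injective _ hanti.injective, Nat.card_Ioc]
  have hcardI : I.card = (bseq lam r - bseq lam N).toNat := Int.card_Ico _ _
  rw [hset, Set.ncard_coe_finset, Finset.card_sdiff_of_subset hJI, hcardI, hcardJ, hbN]
  unfold bseq
  omega

lemma notmem_finite (lam : PartitionSeq) (r : ℕ) :
    {s : ℤ | s < bseq lam r ∧ s ∉ Set.range (bseq lam)}.Finite := by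
  obtain ⟨N0, hN0⟩ := exists_zero lam
  apply (Set.finite_Ico (-(N0:ℤ) - 1) (bseq lam r)).subset
  rintro s ⟨hs1, hs2⟩
  refine ⟨?_, hs1⟩
  by_contra hc
  push_neg at hc
  apply hs2
  refine ⟨(-s - 1).toNat, ?_⟩
  have h3 : N0 ≤ (-s - 1).toNat := by omega
  unfold bseq
  rw [hN0 _ h3]
  omega


lemma hook_eq (lam : PartitionSeq) {r j : ℕ} (hj : j < lam.parts r) :
    (lam.hook r j : ℤ) = bseq lam r - sig lam j := by
  have hr : r < Kf lam j := (lt_Kf_iff lam).mpr hj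
  have hset : {i' : ℕ | r < i' ∧ j < lam.parts i'} = Set.Ioo r (Kf lam j) := by
    ext i'
    simp only [Set.mem_setOf_eq, Set.mem_Ioo]
    constructor
    · rintro ⟨h1, h2⟩; exact ⟨h1, (lt_Kf_iff lam).mpr h2⟩
    · rintro ⟨h1, h2⟩; exact ⟨h1, (lt_Kf_iff lam).mp h2⟩
  have hcard : {i' : ℕ | r < i' ∧ j < lam.parts i'}.ncard = Kf lam j - r - 1 := by
    rw [hset, ← Finset.coe_Ioo, Set.ncard_coe_finset, Nat.card_Ioo]
  unfold PartitionSeq.hook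
  rw [hcard, ← hook_cast lam hj]
  push_cast
  omega

lemma row_count (lam : PartitionSeq) (r b : ℕ) :
    {j : ℕ | j < lam.parts r ∧ lam.hook r j < b}.ncard
      = {s : ℤ | bseq lam r - b < s ∧ s < bseq lam r ∧ s ∉ Set.range (bseq lam)}.ncard := by
  classical
  set E : Set ℤ := {s : ℤ | s < bseq lam r ∧ s ∉ Set.range (bseq lam)} with hE
  have hmaps : Set.MapsTo (sig lam) (Set.Iio (lam.parts r)) E := by
    intro j hj
    simp only [Set.mem_Iio] at hj
    refine ⟨?_, sig_not_mem lam j⟩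
    have hr : r < Kf lam j := (lt_Kf_iff lam).mpr hj
    unfold sig bseq
    omega
  have hinj : Set.InjOn (sig lam) (Set.Iio (lam.parts r)) :=
    (sig_strictMono lam).injective.injOn
  have hEfin : E.Finite := notmem_finite lam r
  have hcardIio : (Set.Iio (lam.parts r)).ncard = lam.parts r := by
    rw [← Finset.coe_Iio, Set.ncard_coe_finset, Nat.card_Iio]
  have himg : sig lam '' Set.Iio (lam.parts r) = E := by
    apply Set.eq_of_subset_of_ncard_le (Set.mapsTo_iff_image_subset.mp hmaps) _ hEfin
    rw [Set.ncard_image_of_injOn hinj, hcardIio, hE, count_notmem]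
  have himg2 : sig lam '' {j : ℕ | j < lam.parts r ∧ lam.hook r j < b}
      = {s : ℤ | bseq lam r - (b:ℤ) < s ∧ s < bseq lam r ∧ s ∉ Set.range (bseq lam)} := by
    ext s
    constructor
    · rintro ⟨j, ⟨hj1, hj2⟩, rfl⟩
      have h1 := hook_eq lam hj1
      have h2 := hmaps (Set.mem_Iio.mpr hj1)
      rw [hE] at h2
      exact ⟨by omega, h2.1, h2.2⟩
    · rintro ⟨hs1, hs2, hs3⟩
      have : s ∈ E := ⟨hs2, hs3⟩
      rw [← himg] at this
      obtain ⟨j, hj, rfl⟩ := this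
      simp only [Set.mem_Iio] at hj
      have h1 := hook_eq lam hj
      exact ⟨j, ⟨hj, by omega⟩, rfl⟩
  calc {j : ℕ | j < lam.parts r ∧ lam.hook r j < b}.ncard
      = (sig lam '' {j : ℕ | j < lam.parts r ∧ lam.hook r j < b}).ncard := by
        rw [Set.ncard_image_of_injOn ((sig_strictMono lam).injective.injOn)]
    _ = _ := by rw [himg2]


def mfun (a : ℕ) (c : Fin a → ℤ) (i : Fin a) : ℤ := -(a:ℤ) * c i - i - 1

lemma mem_Bset_iff {a : ℕ} {c : Fin a → ℤ} {s : ℤ} :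
    s ∈ Bset a c ↔ ∃ (i : Fin a) (n : ℕ), s = mfun a c i - a * n := by
  unfold Bset mfun
  constructor <;> rintro ⟨i, n, h⟩ <;> exact ⟨i, n, by rw [h]; push_cast; ring⟩

def idxf (a : ℕ) (ha : 0 < a) (s : ℤ) : Fin a :=
  ⟨((-s - 1) % a).toNat, by
    have ha' : (0:ℤ) < a := by exact_mod_cast ha
    have h1 : 0 ≤ (-s - 1) % (a:ℤ) := Int.emod_nonneg _ (by omega)
    have h2 : (-s - 1) % (a:ℤ) < a := Int.emod_lt_of_pos _ ha'
    omega⟩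

lemma idxf_val (a : ℕ) (ha : 0 < a) (s : ℤ) :
    ((idxf a ha s).val : ℤ) = (-s - 1) % a := by
  have ha' : (0:ℤ) < a := by exact_mod_cast ha
  have h1 : 0 ≤ (-s - 1) % (a:ℤ) := Int.emod_nonneg _ (by omega)
  simp [idxf, Int.toNat_of_nonneg h1]

lemma dvd_mfun_sub (a : ℕ) (ha : 0 < a) (c : Fin a → ℤ) (s : ℤ) :
    (a:ℤ) ∣ mfun a c (idxf a ha s) - s := by
  refine ⟨-c (idxf a ha s) + (-s - 1) / a, ?_⟩
  have hq := Int.mul_ediv_add_emod (-s - 1) (a:ℤ)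
  have hi := idxf_val a ha s
  unfold mfun
  rw [hi]
  ring_nf
  ring_nf at hq
  linarith

lemma idxf_eq {a : ℕ} (ha : 0 < a) {c : Fin a → ℤ} {i : Fin a} {s : ℤ}
    (h : (a:ℤ) ∣ mfun a c i - s) : idxf a ha s = i := by
  have h2 := dvd_mfun_sub a ha c s
  have h3 : (a:ℤ) ∣ mfun a c i - mfun a c (idxf a ha s) := by
    have := dvd_sub h h2
    simpa using this
  set j := idxf a ha s with hj
  have h4 : mfun a c i - mfun a c j = -(a:ℤ) * (c i - c j) - ((i:ℤ) - (j:ℤ)) := by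
    unfold mfun; push_cast; ring
  have h5 : (a:ℤ) ∣ ((j:ℤ) - (i:ℤ)) := by
    obtain ⟨q, hq⟩ := h3
    exact ⟨q + c i - c j, by rw [h4] at hq; linear_combination hq⟩
  have h6 : ((j:ℤ) - (i:ℤ)) = 0 := by
    apply Int.eq_zero_of_abs_lt_dvd h5
    have := i.isLt
    have := j.isLt
    rw [abs_lt]
    constructor <;> [skip; skip] <;> push_cast <;> omega
  have : (j:ℤ) = (i:ℤ) := by omega
  exact Fin.ext (by exact_mod_cast this)

lemma mem_Bset_iff' {a : ℕ} (ha : 0 < a) {c : Fin a → ℤ} {s : ℤ} :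
    s ∈ Bset a c ↔ s ≤ mfun a c (idxf a ha s) := by
  have ha' : (0:ℤ) < a := by exact_mod_cast ha
  constructor
  · intro hs
    obtain ⟨i, n, rfl⟩ := mem_Bset_iff.mp hs
    have hidx : idxf a ha (mfun a c i - a * n) = i :=
      idxf_eq ha ⟨n, by ring⟩
    rw [hidx]
    have : (0:ℤ) ≤ (a:ℤ) * n := by positivity
    omega
  · intro hs
    obtain ⟨q, hq⟩ := dvd_mfun_sub a ha c s
    have hq0 : 0 ≤ q := by
      by_contra hc
      push_neg at hc
      have : (a:ℤ) * q < 0 := mul_neg_of_pos_of_neg ha' hc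
      omega
    refine mem_Bset_iff.mpr ⟨idxf a ha s, q.toNat, ?_⟩
    have : ((q.toNat : ℤ)) = q := Int.toNat_of_nonneg hq0
    rw [this]
    omega


lemma arow_max {a : ℕ} (ha : 0 < a) {c : Fin a → ℤ} (lam : PartitionSeq)
    (hB : Set.range (bseq lam) = Bset a c) {i : Fin a} {r r' : ℕ}
    (hr : bseq lam r = mfun a c i) (hr' : 0 < lam.parts r')
    (hres : (bseq lam r') % (a:ℤ) = (bseq lam r) % (a:ℤ)) :
    lam.parts r' ≤ lam.parts r := by
  have hanti := bseq_strictAnti lam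
  have hdvd : (a:ℤ) ∣ bseq lam r - bseq lam r' := Int.ModEq.dvd hres
  have hidx : idxf a ha (bseq lam r') = i := idxf_eq ha (by rw [← hr]; exact hdvd)
  have hmem : bseq lam r' ∈ Bset a c := hB ▸ Set.mem_range_self r'
  have hle : bseq lam r' ≤ mfun a c i := by
    have := (mem_Bset_iff' ha).mp hmem
    rwa [hidx] at this
  have hler : bseq lam r' ≤ bseq lam r := by rw [hr]; exact hle
  have hrr' : r ≤ r' := hanti.le_iff_ge.mp hler
  rcases eq_or_lt_of_le hrr' with h | h
  · rw [h]
  · have hcard : (Finset.Ioc r r').card ≤ (Finset.Icc (bseq lam r') (bseq lam r - 1)).card := by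
      apply Finset.card_le_card_of_injOn (bseq lam)
      · intro k hk
        simp only [Finset.mem_coe, Finset.mem_Ioc] at hk
        simp only [Finset.mem_coe, Finset.mem_Icc]
        exact ⟨hanti.antitone hk.2, by have := hanti hk.1; omega⟩
      · exact Set.injOn_of_injective hanti.injective
    rw [Nat.card_Ioc, Int.card_Icc] at hcard
    unfold bseq at *
    omega

lemma arow_unique {a : ℕ} (ha : 0 < a) {c : Fin a → ℤ} (lam : PartitionSeq)
    (hB : Set.range (bseq lam) = Bset a c) {r r₀ : ℕ} (hAR : IsARow a lam r)
    (hr₀ : bseq lam r₀ = mfun a c (idxf a ha (bseq lam r))) : r = r₀ := by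
  have ha' : (0:ℤ) < a := by exact_mod_cast ha
  have hanti := bseq_strictAnti lam
  set i := idxf a ha (bseq lam r) with hi
  have hmemr : bseq lam r ∈ Bset a c := hB ▸ Set.mem_range_self r
  have h1 : bseq lam r ≤ mfun a c i := (mem_Bset_iff' ha).mp hmemr
  have h2 : bseq lam r ≤ bseq lam r₀ := by rw [hr₀]; exact h1
  have h3 : r₀ ≤ r := hanti.le_iff_ge.mp h2
  have hp0 : 0 < lam.parts r := hAR.1
  have hpr₀ : 0 < lam.parts r₀ := lt_of_lt_of_le hp0 (lam.antitone h3)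
  have hdvd0 : (a:ℤ) ∣ bseq lam r₀ - bseq lam r := by
    rw [hr₀]
    exact dvd_mfun_sub a ha c (bseq lam r)
  have hres : (bseq lam r₀) % (a:ℤ) = (bseq lam r) % (a:ℤ) :=
    (Int.modEq_iff_dvd.mpr hdvd0).symm
  have h4 : lam.parts r₀ ≤ lam.parts r := hAR.2 r₀ hpr₀ hres
  have h5 : lam.parts r₀ = lam.parts r := le_antisymm h4 (lam.antitone h3)
  by_contra hne
  have hlt : r₀ < r := by omega
  have hdr : (a:ℤ) ∣ ((r:ℤ) - r₀) := by
    have : bseq lam r₀ - bseq lam r = (r:ℤ) - r₀ := by unfold bseq; rw [h5]; push_cast; ring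
    rwa [this] at hdvd0
  have hge : (a:ℤ) ≤ (r:ℤ) - r₀ := Int.le_of_dvd (by omega) hdr
  have hpar : ∀ t : ℕ, r₀ ≤ t → t ≤ r → lam.parts t = lam.parts r₀ := by
    intro t h1t h2t
    have := lam.antitone h1t
    have := lam.antitone h2t
    omega
  have hstep : ∀ t : ℕ, (t:ℤ) ≤ a → bseq lam (r₀ + t) = bseq lam r₀ - t := by
    intro t ht
    have h1t : r₀ + t ≤ r := by omega
    have := hpar (r₀ + t) (by omega) h1t
    unfold bseq
    rw [this]
    push_cast
    ring
  have hall : ∀ s : ℤ, s < bseq lam r₀ → s ∈ Set.range (bseq lam) := by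
    intro s hs
    rw [hB]
    set j := idxf a ha s with hj
    set t : ℤ := (bseq lam r₀ - s) % a with ht
    have ht0 : 0 ≤ t := Int.emod_nonneg _ (by omega)
    have hta : t < a := Int.emod_lt_of_pos _ ha'
    have htdvd : (a:ℤ) ∣ (bseq lam r₀ - s) - t := Int.dvd_self_sub_of_emod_eq rfl
    have htnat : ((t.toNat : ℤ)) = t := Int.toNat_of_nonneg ht0
    have htB : bseq lam r₀ - t ∈ Bset a c := by
      rw [← hB]
      refine ⟨r₀ + t.toNat, ?_⟩
      rw [hstep t.toNat (by omega), htnat]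
    have hidxt : idxf a ha (bseq lam r₀ - t) = j := by
      apply idxf_eq ha
      have hd1 : (a:ℤ) ∣ mfun a c j - s := dvd_mfun_sub a ha c s
      have : mfun a c j - (bseq lam r₀ - t) = (mfun a c j - s) - ((bseq lam r₀ - s) - t) := by
        ring
      rw [this]
      exact dvd_sub hd1 htdvd
    have hle2 : bseq lam r₀ - t ≤ mfun a c j := by
      have := (mem_Bset_iff' ha).mp htB
      rwa [hidxt] at this
    have hst : s ≤ bseq lam r₀ - t := by
      obtain ⟨q, hq⟩ := htdvd
      have hq0 : 0 ≤ q := by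
        by_contra hc
        push_neg at hc
        have h' : (a:ℤ) * q ≤ (a:ℤ) * (-1) := mul_le_mul_of_nonneg_left (by omega) (by omega)
        omega
      have : (0:ℤ) ≤ (a:ℤ) * q := mul_nonneg (by omega) hq0
      omega
    exact (mem_Bset_iff' ha).mpr (le_trans hst hle2)
  have hempty : {s : ℤ | s < bseq lam r₀ ∧ s ∉ Set.range (bseq lam)} = ∅ := by
    ext s
    simp only [Set.mem_setOf_eq, Set.mem_empty_iff_false, iff_false, not_and, not_not]
    exact fun h => hall s h
  have := count_notmem lam r₀
  rw [hempty] at this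
  simp at this
  omega


lemma ncard_iUnion_fin {α : Type*} {n : ℕ} (f : Fin n → Set α) (hfin : ∀ i, (f i).Finite)
    (hdisj : ∀ i j, i ≠ j → Disjoint (f i) (f j)) :
    (⋃ i, f i).ncard = ∑ i, (f i).ncard := by
  classical
  have h1 : (⋃ i, f i) = ↑(Finset.univ.biUnion fun i => (hfin i).toFinset) := by
    ext x
    simp [Set.Finite.mem_toFinset]
  rw [h1, Set.ncard_coe_finset, Finset.card_biUnion]
  · apply Finset.sum_congr rfl
    intro i _
    rw [Set.ncard_eq_toFinset_card _ (hfin i)]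
  · intro i _ j _ hij
    rw [Function.onFun, Finset.disjoint_left]
    intro x hx hx'
    rw [Set.Finite.mem_toFinset] at hx hx'
    exact Set.disjoint_left.mp (hdisj i j hij) hx hx'

lemma count_interval {a b : ℕ} (ha : 0 < a) (hb : 0 < b) (D : ℤ) (hnd : ¬ (a:ℤ) ∣ D) :
    ({t : ℤ | 1 ≤ t ∧ D - b < (a:ℤ) * t ∧ (a:ℤ) * t < D}.ncard : ℤ)
      = max 0 ⌊(D:ℚ)/a⌋ - max 0 ⌊((D:ℚ) - b)/a⌋ := by
  have ha' : (0:ℚ) < a := by exact_mod_cast ha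
  set F : ℤ := ⌊(D:ℚ)/a⌋ with hF
  set G : ℤ := ⌊((D:ℚ) - b)/a⌋ with hG
  have hFG : G ≤ F := by
    apply Int.floor_le_floor
    apply div_le_div_of_nonneg_right _ (le_of_lt ha')
    have hb' : (0:ℚ) ≤ b := by positivity
    linarith
  have hmem : ∀ t : ℤ, (1 ≤ t ∧ D - b < (a:ℤ) * t ∧ (a:ℤ) * t < D) ↔
      (max 1 (G + 1) ≤ t ∧ t ≤ F) := by
    intro t
    have h1 : ((a:ℤ) * t < D) ↔ t ≤ F := by
      rw [hF, Int.le_floor, le_div_iff₀ ha']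
      constructor
      · intro h
        have h' : (a:ℤ) * t ≤ D := by omega
        have h'' : (((a:ℤ) * t : ℤ) : ℚ) ≤ ((D:ℤ):ℚ) := by exact_mod_cast h'
        push_cast at h'' ⊢
        linarith
      · intro h
        have h' : (((a:ℤ) * t : ℤ) : ℚ) ≤ ((D:ℤ):ℚ) := by push_cast at h ⊢; linarith
        have h'' : (a:ℤ) * t ≤ D := by exact_mod_cast h'
        rcases lt_or_eq_of_le h'' with h3 | h3
        · exact h3
        · exact absurd ⟨t, h3.symm⟩ hnd
    have h2 : (D - b < (a:ℤ) * t) ↔ G + 1 ≤ t := by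
      rw [hG, Int.add_one_le_iff, Int.floor_lt, div_lt_iff₀ ha']
      constructor
      · intro h
        have h' : (((D - b : ℤ)) : ℚ) < (((a:ℤ) * t : ℤ) : ℚ) := by exact_mod_cast h
        push_cast at h' ⊢
        linarith
      · intro h
        have h' : (((D - b : ℤ)) : ℚ) < (((a:ℤ) * t : ℤ) : ℚ) := by push_cast at h ⊢; linarith
        exact_mod_cast h'
    omega
  have hset : {t : ℤ | 1 ≤ t ∧ D - b < (a:ℤ) * t ∧ (a:ℤ) * t < D}
      = ↑(Finset.Icc (max 1 (G + 1)) F) := by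
    ext t
    simp only [Set.mem_setOf_eq, Finset.coe_Icc, Set.mem_Icc]
    exact hmem t
  rw [hset, Set.ncard_coe_finset, Int.card_Icc]
  omega


lemma mfun_sub_not_dvd {a : ℕ} (ha : 0 < a) (c : Fin a → ℤ) {i j : Fin a} (hij : i ≠ j) :
    ¬ (a:ℤ) ∣ (mfun a c i - mfun a c j) := by
  intro ⟨q, hq⟩
  have h4 : mfun a c i - mfun a c j = -(a:ℤ) * (c i - c j) - ((i:ℤ) - (j:ℤ)) := by
    unfold mfun; push_cast; ring
  have h5 : (a:ℤ) ∣ ((j:ℤ) - (i:ℤ)) := ⟨q + c i - c j, by rw [h4] at hq; linear_combination hq⟩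
  have h6 : ((j:ℤ) - (i:ℤ)) = 0 := by
    apply Int.eq_zero_of_abs_lt_dvd h5
    have := i.isLt
    have := j.isLt
    rw [abs_lt]
    constructor <;> push_cast <;> omega
  exact hij (Fin.ext (by omega)).symm

lemma count_Ei {a : ℕ} (ha : 0 < a) (c : Fin a → ℤ) {b : ℕ} (hb : 0 < b) (i : Fin a) :
    (({s : ℤ | mfun a c i - b < s ∧ s < mfun a c i ∧ s ∉ Bset a c}.ncard : ℤ))
      = ∑ j : Fin a, (max 0 ⌊((mfun a c i - mfun a c j : ℤ):ℚ)/a⌋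
          - max 0 ⌊((mfun a c i - mfun a c j : ℤ):ℚ)/a - (b:ℚ)/a⌋) := by
  classical
  have ha' : (0:ℤ) < a := by exact_mod_cast ha
  set m : Fin a → ℤ := mfun a c with hm
  set Ej : Fin a → Set ℤ :=
    fun j => {s : ℤ | m i - b < s ∧ s < m i ∧ idxf a ha s = j ∧ m j < s} with hEj
  have hunion : {s : ℤ | m i - b < s ∧ s < m i ∧ s ∉ Bset a c} = ⋃ j, Ej j := by
    ext s
    simp only [Set.mem_setOf_eq, Set.mem_iUnion, hEj]
    constructor
    · rintro ⟨h1, h2, h3⟩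
      have h4 : m (idxf a ha s) < s := by
        by_contra hc
        push_neg at hc
        exact h3 ((mem_Bset_iff' ha).mpr hc)
      exact ⟨idxf a ha s, h1, h2, rfl, h4⟩
    · rintro ⟨j, h1, h2, rfl, h4⟩
      refine ⟨h1, h2, ?_⟩
      intro hmem
      have h5 := (mem_Bset_iff' ha).mp hmem
      rw [← hm] at h5
      omega
  have hfin : ∀ j, (Ej j).Finite := by
    intro j
    apply (Set.finite_Ioo (m i - b) (m i)).subset
    rintro s ⟨h1, h2, _, _⟩
    exact ⟨h1, h2⟩
  have hdisj : ∀ j j', j ≠ j' → Disjoint (Ej j) (Ej j') := by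
    intro j j' hjj
    rw [Set.disjoint_left]
    rintro s ⟨_, _, rfl, _⟩ ⟨_, _, h, _⟩
    exact hjj h
  rw [hunion, ncard_iUnion_fin Ej hfin hdisj]
  push_cast
  apply Finset.sum_congr rfl
  intro j _
  rcases eq_or_ne i j with rfl | hij
  · have hempty : Ej i = ∅ := by
      ext s
      simp only [hEj, Set.mem_setOf_eq, Set.mem_empty_iff_false, iff_false]
      rintro ⟨_, h2, _, h4⟩
      omega
    rw [hempty, sub_self, zero_div]
    have h2 : ⌊(0:ℚ) - (b:ℚ)/(a:ℚ)⌋ < 0 := by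
      apply Int.floor_lt.mpr
      push_cast
      have : (0:ℚ) < (b:ℚ)/(a:ℚ) := by positivity
      linarith
    simp only [Set.ncard_empty, Nat.cast_zero, Int.floor_zero]
    omega
  · set D : ℤ := m i - m j with hD
    have hnd : ¬ (a:ℤ) ∣ D := mfun_sub_not_dvd ha c hij
    have himg : Ej j = (fun t : ℤ => m j + a * t) ''
        {t : ℤ | 1 ≤ t ∧ D - b < (a:ℤ) * t ∧ (a:ℤ) * t < D} := by
      ext s
      simp only [hEj, Set.mem_setOf_eq, Set.mem_image]
      constructor
      · rintro ⟨h1, h2, rfl, h4⟩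
        obtain ⟨q, hq⟩ := dvd_mfun_sub a ha c s
        have hkey : (a:ℤ) * (-q) = s - m (idxf a ha s) := by rw [hm]; linarith
        refine ⟨-q, ⟨?_, ?_, ?_⟩, ?_⟩
        · by_contra hc
          push_neg at hc
          have h' : (a:ℤ) * (-q) ≤ (a:ℤ) * 0 :=
            mul_le_mul_of_nonneg_left (by omega) (by omega)
          rw [mul_zero] at h'
          omega
        · rw [hkey]; omega
        · rw [hkey]; omega
        · linarith [hq]
      · rintro ⟨t, ⟨h1, h2, h3⟩, rfl⟩
        have hat : (0:ℤ) < (a:ℤ) * t := by positivity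
        have hidx : idxf a ha (m j + (a:ℤ) * t) = j := by
          have hdv : (a:ℤ) ∣ mfun a c j - (m j + (a:ℤ) * t) := ⟨-t, by rw [hm]; ring⟩
          exact idxf_eq ha hdv
        exact ⟨by omega, by omega, hidx, by omega⟩
    have hinj : Function.Injective (fun t : ℤ => m j + (a:ℤ) * t) := by
      intro t t' h
      simp only at h
      have : (a:ℤ) * t = (a:ℤ) * t' := by omega
      exact mul_left_cancel₀ (by omega) this
    rw [himg, Set.ncard_image_of_injective _ hinj, count_interval ha hb D hnd, hD]
    push_cast
    rw [div_sub_div_same]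

end Stmt13Aux

open Stmt13Aux

/-- the skew length of an `(a,b)`-core is
`Σ_{i,j} (⌊x_i − x_j⌋₀ − ⌊x_i − x_j − b/a⌋₀)` where `⌊y⌋₀ = max(0, ⌊y⌋)`. -/
theorem stmt13 (a b : ℕ) (ha : 0 < a) (hab : a < b) (hco : Nat.Coprime a b)
    (c : Fin a → ℤ) (hc : (∑ i, c i) = 0)
    (lam : PartitionSeq) (hlam : lam.betaSet = Bset a c) (hbcore : lam.IsCore b) :
    (skewLength a b lam : ℤ) =
      ∑ i : Fin a, ∑ j : Fin a,
        (max 0 ⌊xcoord a c i - xcoord a c j⌋ -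
          max 0 ⌊xcoord a c i - xcoord a c j - (b : ℚ) / a⌋) := by
  classical
  have hb : 0 < b := lt_trans ha hab
  have hB : Set.range (bseq lam) = Bset a c := hlam
  have hrowex : ∀ i : Fin a, ∃ r : ℕ, bseq lam r = mfun a c i := by
    intro i
    have h1 : mfun a c i ∈ Bset a c := mem_Bset_iff.mpr ⟨i, 0, by push_cast; ring⟩
    rw [← hB] at h1
    exact h1
  choose row hrow using hrowex
  have hrowinj : Function.Injective row := by
    intro i i' h
    have h1 : mfun a c i = mfun a c i' := by rw [← hrow i, ← hrow i', h]
    have h2 : idxf a ha (mfun a c i') = i := idxf_eq ha (by rw [← h1]; exact ⟨0, by ring⟩)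
    have h3 : idxf a ha (mfun a c i') = i' := idxf_eq ha ⟨0, by ring⟩
    rw [← h2, h3]
  set T : Fin a → Set ℕ :=
    fun i => {j | j < lam.parts (row i) ∧ lam.hook (row i) j < b} with hT
  set Si : Fin a → Set (ℕ × ℕ) := fun i => (fun j => (row i, j)) '' T i with hSi
  have hSdecomp : {cell : ℕ × ℕ |
      IsARow a lam cell.1 ∧ cell.2 < lam.parts cell.1 ∧ lam.hook cell.1 cell.2 < b}
      = ⋃ i, Si i := by
    ext p
    simp only [Set.mem_setOf_eq, hSi, hT, Set.mem_iUnion, Set.mem_image]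
    constructor
    · rintro ⟨hAR, h2, h3⟩
      have heq : p.1 = row (idxf a ha (bseq lam p.1)) :=
        arow_unique ha lam hB hAR (hrow _)
      refine ⟨idxf a ha (bseq lam p.1), p.2, ⟨?_, ?_⟩, ?_⟩
      · rw [← heq]; exact h2
      · rw [← heq]; exact h3
      · rw [← heq]
    · rintro ⟨i, j, ⟨hj1, hj2⟩, rfl⟩
      refine ⟨⟨show 0 < lam.parts (row i) by omega, ?_⟩, hj1, hj2⟩
      intro r' hr' hres
      exact arow_max ha lam hB (hrow i) hr' hres
  have hTfin : ∀ i, (T i).Finite :=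
    fun i => (Set.finite_Iio (lam.parts (row i))).subset (fun j hj => hj.1)
  have hSifin : ∀ i, (Si i).Finite := fun i => ((hTfin i).image _)
  have hSidisj : ∀ i i', i ≠ i' → Disjoint (Si i) (Si i') := by
    intro i i' hne
    rw [Set.disjoint_left]
    rintro p ⟨j, _, rfl⟩ ⟨j', _, hp⟩
    exact hne (hrowinj (congrArg Prod.fst hp)).symm
  have hcard : skewLength a b lam = ∑ i, (T i).ncard := by
    unfold skewLength
    rw [hSdecomp, ncard_iUnion_fin Si hSifin hSidisj]
    apply Finset.sum_congr rfl
    intro i _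
    rw [hSi]
    exact Set.ncard_image_of_injective _ (fun j j' h => congrArg Prod.snd h)
  have hTcount : ∀ i : Fin a, ((T i).ncard : ℤ)
      = ∑ j : Fin a, (max 0 ⌊((mfun a c i - mfun a c j : ℤ):ℚ)/a⌋
          - max 0 ⌊((mfun a c i - mfun a c j : ℤ):ℚ)/a - (b:ℚ)/a⌋) := by
    intro i
    have h1 := row_count lam (row i) b
    rw [hrow i, hB] at h1
    rw [hT]
    simp only []
    rw [h1]
    exact count_Ei ha c hb i
  have hconv : ∀ i j : Fin a,
      ((mfun a c j - mfun a c i : ℤ):ℚ)/a = xcoord a c i - xcoord a c j := by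
    intro i j
    have ha0 : (a:ℚ) ≠ 0 := by positivity
    unfold mfun xcoord
    push_cast
    field_simp
    ring
  rw [hcard]
  push_cast
  rw [show (∑ i, ((T i).ncard : ℤ)) = ∑ i : Fin a, ∑ j : Fin a,
      (max 0 ⌊((mfun a c i - mfun a c j : ℤ):ℚ)/a⌋
        - max 0 ⌊((mfun a c i - mfun a c j : ℤ):ℚ)/a - (b:ℚ)/a⌋) from
    Finset.sum_congr rfl (fun i _ => hTcount i)]
  rw [Finset.sum_comm]
  apply Finset.sum_congr rfl
  intro i _
  apply Finset.sum_congr rfl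
  intro j _
  rw [hconv i j]
end

section
/- For every integer n ≥ 1, Σ_{σ ∈ S_n} q^{siz(σ)}·t^{maj(σ)} = Π_{k=1}^{n} [k]_{q^{n+1−k}·t}, as an identity of polynomials in q and t, where [k]_x = 1 + x + x² + ⋯ + x^{k−1}. -/
/-- The descents of a permutation of `Fin n`, encoded as the pairs of adjacent positions
`(i, i+1)` (0-indexed) with `σ(i) > σ(i+1)`; the 1-indexed descent position is `i + 1`. -/
def descPairs (n : ℕ) (σ : Equiv.Perm (Fin n)) : Finset (Fin n × Fin n) :=
  Finset.univ.filter fun p => p.2.val = p.1.val + 1 ∧ σ p.2 < σ p.1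

/-- The major index `maj(σ) = Σ_{d ∈ DES(σ)} d` (1-indexed descent positions). -/
def maj (n : ℕ) (σ : Equiv.Perm (Fin n)) : ℕ :=
  ∑ p ∈ descPairs n σ, (p.1.val + 1)

/-- The inversion number `inv(σ)`. -/
def inv (n : ℕ) (σ : Equiv.Perm (Fin n)) : ℕ :=
  (Finset.univ.filter fun p : Fin n × Fin n => p.1 < p.2 ∧ σ p.2 < σ p.1).card

/-- The size statistic `siz(σ) = Σ_{d ∈ DES(σ)} (n+1−d)·d − inv(σ)`
(1-indexed descent positions `d = i + 1`, so `n+1−d = n − i`). -/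
def siz (n : ℕ) (σ : Equiv.Perm (Fin n)) : ℕ :=
  (∑ p ∈ descPairs n σ, (n - p.1.val) * (p.1.val + 1)) - inv n σ

namespace Stmt17Aux

open Finset Equiv

/-- values of σ as a function ℕ → ℕ (junk 0 out of range) -/
def pval (N : ℕ) (σ : Equiv.Perm (Fin N)) (i : ℕ) : ℕ :=
  if h : i < N then (σ ⟨i, h⟩).val else 0

def Wn (N : ℕ) (σ : Equiv.Perm (Fin N)) : ℕ :=
  ∑ p ∈ descPairs N σ, (N - p.1.val) * (p.1.val + 1)

lemma siz_eq (N : ℕ) (σ : Equiv.Perm (Fin N)) : siz N σ = Wn N σ - inv N σ := rfl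

lemma cnt_gt (N v : ℕ) : (∑ i ∈ range N, if v < i then (1:ℕ) else 0) = N - (v+1) := by
  induction N with
  | zero => simp
  | succ M ih => rw [Finset.sum_range_succ, ih]; split_ifs <;> omega

lemma cnt_lt (N v : ℕ) : (∑ i ∈ range N, if i < v then (1:ℕ) else 0) = min N v := by
  induction N with
  | zero => simp
  | succ M ih => rw [Finset.sum_range_succ, ih]; split_ifs <;> omega

lemma cnt_le (N v : ℕ) : (∑ i ∈ range N, if i ≤ v then (1:ℕ) else 0) = min N (v+1) := by
  induction N with
  | zero => simp
  | succ M ih => rw [Finset.sum_range_succ, ih]; split_ifs <;> omega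

lemma pval_lt_bound (N : ℕ) (σ : Equiv.Perm (Fin N)) (i : ℕ) (h : 0 < N) :
    pval N σ i ≤ N - 1 := by
  unfold pval
  split
  · exact Nat.le_sub_one_of_lt (Fin.isLt _)
  · omega

lemma pval_val (N : ℕ) (σ : Equiv.Perm (Fin N)) (a : Fin N) :
    pval N σ a.val = (σ a).val := by
  unfold pval
  rw [dif_pos a.isLt, Fin.eta]

lemma descPairs_sum (N : ℕ) (σ : Equiv.Perm (Fin N)) (g : ℕ → ℕ) :
    ∑ p ∈ descPairs N σ, g p.1.val
      = ∑ i ∈ range (N-1), if pval N σ (i+1) < pval N σ i then g i else 0 := by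
  classical
  rw [descPairs, Finset.sum_filter, Fintype.sum_prod_type]
  have h1 : ∀ a : Fin N,
      (∑ b : Fin N, if (b : Fin N).val = a.val + 1 ∧ σ b < σ a then g a.val else 0)
        = (fun i : ℕ => if i+1 < N ∧ pval N σ (i+1) < pval N σ i then g i else 0) a.val := by
    intro a
    by_cases ha : a.val + 1 < N
    · rw [Finset.sum_eq_single (⟨a.val+1, ha⟩ : Fin N)]
      · simp only
        apply if_congr _ rfl rfl
        have hpv1 : pval N σ (a.val+1) = (σ ⟨a.val+1, ha⟩).val := dif_pos ha
        rw [hpv1, pval_val]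
        constructor
        · rintro ⟨-, h⟩; exact ⟨ha, Fin.lt_def.mp h⟩
        · rintro ⟨-, h⟩; exact ⟨trivial, Fin.lt_def.mpr h⟩
      · intro b _ hb
        apply if_neg
        rintro ⟨h1, _⟩
        exact hb (Fin.ext h1)
      · intro h; exact absurd (Finset.mem_univ _) h
    · simp only
      rw [if_neg (by omega : ¬(a.val + 1 < N ∧ pval N σ (a.val+1) < pval N σ a.val))]
      apply Finset.sum_eq_zero
      intro b _
      apply if_neg
      rintro ⟨h1, _⟩
      have := b.isLt
      omega
  rw [Finset.sum_congr rfl (fun a _ => h1 a),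
    Fin.sum_univ_eq_sum_range (fun i : ℕ => if i+1 < N ∧ pval N σ (i+1) < pval N σ i then g i else 0) N]
  rcases N with _ | M
  · simp
  · rw [Finset.sum_range_succ, Nat.succ_sub_one]
    rw [if_neg (by omega : ¬(M + 1 < M + 1 ∧ pval (M+1) σ (M+1) < pval (M+1) σ M)), add_zero]
    apply Finset.sum_congr rfl
    intro i hi
    have hi' := Finset.mem_range.mp hi
    exact if_congr (and_iff_right (by omega)) rfl rfl

lemma inv_eq (N : ℕ) (σ : Equiv.Perm (Fin N)) :
    inv N σ = ∑ a ∈ range N, ∑ b ∈ range N,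
      if a < b ∧ pval N σ b < pval N σ a then (1:ℕ) else 0 := by
  classical
  rw [inv, Finset.card_filter, Fintype.sum_prod_type]
  have h1 : ∀ a : Fin N,
      (∑ b : Fin N, if (a, b).1 < (a, b).2 ∧ σ (a, b).2 < σ (a, b).1 then (1:ℕ) else 0)
        = (fun i : ℕ => ∑ j ∈ range N, if i < j ∧ pval N σ j < pval N σ i then (1:ℕ) else 0) a.val := by
    intro a
    have h2 : ∀ b : Fin N, (if a < b ∧ σ b < σ a then (1:ℕ) else 0)
        = (fun j : ℕ => if a.val < j ∧ pval N σ j < pval N σ a.val then (1:ℕ) else 0) b.val := by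
      intro b
      apply if_congr _ rfl rfl
      rw [pval_val, pval_val]
      constructor
      · rintro ⟨h, h'⟩; exact ⟨Fin.lt_def.mp h, Fin.lt_def.mp h'⟩
      · rintro ⟨h, h'⟩; exact ⟨Fin.lt_def.mpr h, Fin.lt_def.mpr h'⟩
    simp only
    rw [Finset.sum_congr rfl (fun b _ => h2 b),
      Fin.sum_univ_eq_sum_range (fun j : ℕ => if a.val < j ∧ pval N σ j < pval N σ a.val then (1:ℕ) else 0) N]
  rw [Finset.sum_congr rfl (fun a _ => h1 a),
    Fin.sum_univ_eq_sum_range (fun i : ℕ => ∑ j ∈ range N, if i < j ∧ pval N σ j < pval N σ i then (1:ℕ) else 0) N]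

section Rotation

variable {m : ℕ}

/-- position (as ℕ) of the maximal value -/
def pvpos (m : ℕ) (σ : Equiv.Perm (Fin (m+1))) : ℕ := (σ⁻¹ (Fin.last m)).val

lemma pvpos_lt (σ : Equiv.Perm (Fin (m+1))) : pvpos m σ < m + 1 := (σ⁻¹ (Fin.last m)).isLt

lemma pval_pvpos (σ : Equiv.Perm (Fin (m+1))) : pval (m+1) σ (pvpos m σ) = m := by
  unfold pvpos
  rw [pval_val, Equiv.Perm.inv_def, Equiv.apply_symm_apply, Fin.val_last]

lemma pval_ne_pvpos (σ : Equiv.Perm (Fin (m+1))) (x : ℕ) (hx : x < m + 1)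
    (hne : x ≠ pvpos m σ) : pval (m+1) σ x < m := by
  have h1 : pval (m+1) σ x = (σ ⟨x, hx⟩).val := dif_pos hx
  have h2 : (σ ⟨x, hx⟩).val ≤ m := Fin.is_le _
  rcases Nat.lt_or_ge (σ ⟨x, hx⟩).val m with h | h
  · omega
  · exfalso
    have h3 : σ ⟨x, hx⟩ = Fin.last m := Fin.ext (by rw [Fin.val_last]; omega)
    have h4 : (⟨x, hx⟩ : Fin (m+1)) = σ⁻¹ (Fin.last m) := by
      rw [← h3, Equiv.Perm.inv_def, Equiv.symm_apply_apply]
    exact hne (congrArg Fin.val h4)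

lemma pval_rot (σ : Equiv.Perm (Fin (m+1))) (x : ℕ) (hx : x < m + 1) :
    pval (m+1) (finRotate (m+1) * σ) x
      = if x = pvpos m σ then 0 else pval (m+1) σ x + 1 := by
  have h1 : pval (m+1) (finRotate (m+1) * σ) x = ((finRotate (m+1) * σ) ⟨x, hx⟩).val :=
    dif_pos hx
  rw [h1, Equiv.Perm.mul_apply, finRotate_succ_apply, Fin.val_add_one]
  have h2 : pval (m+1) σ x = (σ ⟨x, hx⟩).val := dif_pos hx
  have h3 : σ ⟨x, hx⟩ = Fin.last m ↔ x = pvpos m σ := by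
    constructor
    · intro h
      have : (⟨x, hx⟩ : Fin (m+1)) = σ⁻¹ (Fin.last m) := by
        rw [← h, Equiv.Perm.inv_def, Equiv.symm_apply_apply]
      exact congrArg Fin.val this
    · intro h
      have : (⟨x, hx⟩ : Fin (m+1)) = σ⁻¹ (Fin.last m) := Fin.ext h
      rw [this, Equiv.Perm.inv_def, Equiv.apply_symm_apply]
  rw [h2]
  split_ifs with hc1 hc2 hc2
  · rfl
  · exact absurd (h3.mp hc1) hc2
  · exact absurd (h3.mpr hc2) hc1
  · rfl

lemma surgery (σ : Equiv.Perm (Fin (m+1))) (g : ℕ → ℕ) :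
    (∑ i ∈ range m, if pval (m+1) (finRotate (m+1) * σ) (i+1)
        < pval (m+1) (finRotate (m+1) * σ) i then g i else 0)
      + (if pvpos m σ < m then g (pvpos m σ) else 0)
    = (∑ i ∈ range m, if pval (m+1) σ (i+1) < pval (m+1) σ i then g i else 0)
      + (if 0 < pvpos m σ then g (pvpos m σ - 1) else 0) := by
  set pv := pvpos m σ with hpvdef
  have hpv : pv < m + 1 := pvpos_lt σ
  have key : ∀ i ∈ range m,
      (if pval (m+1) (finRotate (m+1) * σ) (i+1)
          < pval (m+1) (finRotate (m+1) * σ) i then g i else 0)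
        + (if i = pv then g i else 0)
      = (if pval (m+1) σ (i+1) < pval (m+1) σ i then g i else 0)
        + (if i + 1 = pv then g i else 0) := by
    intro i hi
    have hi' : i < m := Finset.mem_range.mp hi
    rw [pval_rot σ i (by omega), pval_rot σ (i+1) (by omega)]
    by_cases hA : i = pv
    · have hB : ¬ (i + 1 = pv) := by omega
      have h1 : pval (m+1) σ (i+1) < m := pval_ne_pvpos σ (i+1) (by omega) (by omega)
      have h2 : pval (m+1) σ i = m := by rw [hA]; exact pval_pvpos σ
      split_ifs <;> omega
    · by_cases hB : i + 1 = pv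
      · have h1 : pval (m+1) σ i < m := pval_ne_pvpos σ i (by omega) hA
        have h2 : pval (m+1) σ (i+1) = m := by rw [hB]; exact pval_pvpos σ
        split_ifs <;> omega
      · rw [if_neg hA, if_neg hB, if_neg hA, if_neg hB, add_zero, add_zero]
        apply if_congr _ rfl rfl
        omega
  have hkey := Finset.sum_congr rfl key
  rw [Finset.sum_add_distrib, Finset.sum_add_distrib] at hkey
  rw [Finset.sum_ite_eq' (range m) pv g] at hkey
  have e2 : (∑ i ∈ range m, if i + 1 = pv then g i else 0)
      = if 0 < pv then g (pv - 1) else 0 := by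
    rcases pv with _ | k
    · simp
    · have : ∀ i ∈ range m, (if i + 1 = k + 1 then g i else 0) = (if i = k then g i else 0) := by
        intro i _
        exact if_congr (by omega) rfl rfl
      rw [Finset.sum_congr rfl this, Finset.sum_ite_eq' (range m) k g]
      rw [if_pos (Nat.succ_pos k)]
      have hk : k < m := by omega
      rw [if_pos (Finset.mem_range.mpr hk)]
      rfl
  rw [e2] at hkey
  simp only [Finset.mem_range] at hkey
  exact hkey

lemma SL_maj (σ : Equiv.Perm (Fin (m+1))) :
    maj (m+1) (finRotate (m+1) * σ)
        + (if pvpos m σ < m then pvpos m σ + 1 else 0)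
      = maj (m+1) σ + pvpos m σ := by
  have h := surgery σ (fun i => i + 1)
  have t1 := descPairs_sum (m+1) (finRotate (m+1) * σ) (fun i => i + 1)
  have t2 := descPairs_sum (m+1) σ (fun i => i + 1)
  simp only [Nat.add_sub_cancel] at t1 t2
  rw [maj, maj]
  rw [t1, t2]
  rw [h]
  have : (if 0 < pvpos m σ then pvpos m σ - 1 + 1 else 0) = pvpos m σ := by
    split_ifs <;> omega
  rw [this]

lemma SL_W (σ : Equiv.Perm (Fin (m+1))) :
    Wn (m+1) (finRotate (m+1) * σ)
        + (if pvpos m σ < m then (m + 1 - pvpos m σ) * (pvpos m σ + 1) else 0)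
      = Wn (m+1) σ + (m + 2 - pvpos m σ) * pvpos m σ := by
  have h := surgery σ (fun i => (m + 1 - i) * (i + 1))
  have t1 := descPairs_sum (m+1) (finRotate (m+1) * σ) (fun i => (m + 1 - i) * (i + 1))
  have t2 := descPairs_sum (m+1) σ (fun i => (m + 1 - i) * (i + 1))
  simp only [Nat.add_sub_cancel] at t1 t2
  rw [Wn, Wn, t1, t2, h]
  have : (if 0 < pvpos m σ then (m + 1 - (pvpos m σ - 1)) * (pvpos m σ - 1 + 1) else 0)
      = (m + 2 - pvpos m σ) * pvpos m σ := by
    split_ifs with hc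
    · have h1 : m + 1 - (pvpos m σ - 1) = m + 2 - pvpos m σ := by omega
      have h2 : pvpos m σ - 1 + 1 = pvpos m σ := by omega
      rw [h1, h2]
    · have : pvpos m σ = 0 := by omega
      rw [this, mul_zero]
  rw [this]

lemma SL_inv (σ : Equiv.Perm (Fin (m+1))) :
    inv (m+1) (finRotate (m+1) * σ) + (m - pvpos m σ)
      = inv (m+1) σ + pvpos m σ := by
  set pv := pvpos m σ with hpvdef
  have hpv : pv < m + 1 := pvpos_lt σ
  have key : ∀ a ∈ range (m+1), ∀ b ∈ range (m+1),
      ((if a < b ∧ pval (m+1) (finRotate (m+1) * σ) b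
          < pval (m+1) (finRotate (m+1) * σ) a then (1:ℕ) else 0)
        + (if a < b ∧ a = pv then (1:ℕ) else 0))
      = ((if a < b ∧ pval (m+1) σ b < pval (m+1) σ a then (1:ℕ) else 0)
        + (if a < b ∧ b = pv then (1:ℕ) else 0)) := by
    intro a ha b hb
    have ha' : a < m + 1 := Finset.mem_range.mp ha
    have hb' : b < m + 1 := Finset.mem_range.mp hb
    rw [pval_rot σ a ha', pval_rot σ b hb']
    by_cases hA : a = pv
    · by_cases hB : b = pv
      · rw [hA, hB]; simp [lt_irrefl]
      · have h1 : pval (m+1) σ b < m := pval_ne_pvpos σ b hb' hB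
        have h2 : pval (m+1) σ pv = m := pval_pvpos σ
        rw [if_neg hB, if_pos hA, hA, h2]
        split_ifs <;> omega
    · by_cases hB : b = pv
      · have h1 : pval (m+1) σ a < m := pval_ne_pvpos σ a ha' hA
        have h2 : pval (m+1) σ pv = m := pval_pvpos σ
        rw [if_pos hB, if_neg hA, hB, h2]
        split_ifs <;> omega
      · rw [if_neg hA, if_neg hB]
        split_ifs <;> omega
  have hkey : (∑ a ∈ range (m+1), ∑ b ∈ range (m+1),
      ((if a < b ∧ pval (m+1) (finRotate (m+1) * σ) b
          < pval (m+1) (finRotate (m+1) * σ) a then (1:ℕ) else 0)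
        + (if a < b ∧ a = pv then (1:ℕ) else 0)))
      = (∑ a ∈ range (m+1), ∑ b ∈ range (m+1),
      ((if a < b ∧ pval (m+1) σ b < pval (m+1) σ a then (1:ℕ) else 0)
        + (if a < b ∧ b = pv then (1:ℕ) else 0))) := by
    apply Finset.sum_congr rfl
    intro a ha
    exact Finset.sum_congr rfl (fun b hb => key a ha b hb)
  simp only [Finset.sum_add_distrib] at hkey
  have e1 : (∑ a ∈ range (m+1), ∑ b ∈ range (m+1),
      if a < b ∧ a = pv then (1:ℕ) else 0) = m - pv := by
    have inner : ∀ a ∈ range (m+1), (∑ b ∈ range (m+1),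
        if a < b ∧ a = pv then (1:ℕ) else 0) = if a = pv then m - pv else 0 := by
      intro a _
      by_cases hA : a = pv
      · rw [if_pos hA]
        have : ∀ b ∈ range (m+1), (if a < b ∧ a = pv then (1:ℕ) else 0)
            = (if pv < b then (1:ℕ) else 0) := by
          intro b _
          apply if_congr _ rfl rfl
          rw [hA]; omega
        rw [Finset.sum_congr rfl this, cnt_gt]
        omega
      · rw [if_neg hA]
        apply Finset.sum_eq_zero
        intro b _
        exact if_neg (fun h => hA h.2)
    rw [Finset.sum_congr rfl inner,
      Finset.sum_ite_eq' (range (m+1)) pv (fun _ => m - pv),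
      if_pos (Finset.mem_range.mpr hpv)]
  have e2 : (∑ a ∈ range (m+1), ∑ b ∈ range (m+1),
      if a < b ∧ b = pv then (1:ℕ) else 0) = pv := by
    have inner : ∀ a ∈ range (m+1), (∑ b ∈ range (m+1),
        if a < b ∧ b = pv then (1:ℕ) else 0) = if a < pv then 1 else 0 := by
      intro a _
      have : ∀ b ∈ range (m+1), (if a < b ∧ b = pv then (1:ℕ) else 0)
          = (if b = pv then (if a < pv then (1:ℕ) else 0) else 0) := by
        intro b _
        by_cases hB : b = pv
        · rw [if_pos hB, hB]
          apply if_congr _ rfl rfl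
          omega
        · rw [if_neg hB, if_neg (fun h => hB h.2)]
      rw [Finset.sum_congr rfl this,
        Finset.sum_ite_eq' (range (m+1)) pv (fun _ => if a < pv then (1:ℕ) else 0),
        if_pos (Finset.mem_range.mpr hpv)]
    rw [Finset.sum_congr rfl inner, cnt_lt]
    omega
  rw [e1, e2] at hkey
  rw [inv_eq, inv_eq]
  exact hkey

lemma SL4 (σ : Equiv.Perm (Fin (m+1))) :
    Wn (m+1) (finRotate (m+1) * σ) + inv (m+1) σ + maj (m+1) σ
      = Wn (m+1) σ + inv (m+1) (finRotate (m+1) * σ)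
        + maj (m+1) (finRotate (m+1) * σ) := by
  have hpv : pvpos m σ < m + 1 := pvpos_lt σ
  have h1 := SL_maj σ
  have h2 := SL_W σ
  have h3 := SL_inv σ
  by_cases h : pvpos m σ < m
  · rw [if_pos h] at h1 h2
    have ha : (m + 1 - pvpos m σ) * (pvpos m σ + 1) + 2 * pvpos m σ
        = (m + 2 - pvpos m σ) * pvpos m σ + (m + 1) := by
      have e1 : m + 1 - pvpos m σ = (m - pvpos m σ) + 1 := by omega
      have e2 : m + 2 - pvpos m σ = (m - pvpos m σ) + 2 := by omega
      have e3 : m + 1 = pvpos m σ + (m - pvpos m σ) + 1 := by omega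
      rw [e1, e2, e3]
      ring
    generalize hA : (m + 1 - pvpos m σ) * (pvpos m σ + 1) = A at h2 ha
    generalize hB : (m + 2 - pvpos m σ) * pvpos m σ = B at h2 ha
    omega
  · have hpvm : pvpos m σ = m := by omega
    rw [if_neg h] at h1 h2
    have hB : (m + 2 - pvpos m σ) * pvpos m σ = 2 * m := by
      rw [hpvm]
      have : m + 2 - m = 2 := by omega
      rw [this]
    rw [hB] at h2
    omega

lemma SL_maj' (σ : Equiv.Perm (Fin (m+1))) (h : pvpos m σ ≠ m) :
    maj (m+1) σ = maj (m+1) (finRotate (m+1) * σ) + 1 := by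
  have hpv : pvpos m σ < m + 1 := pvpos_lt σ
  have h1 := SL_maj σ
  rw [if_pos (by omega : pvpos m σ < m)] at h1
  omega

end Rotation

section Extension

variable {m : ℕ}

def extp (τ : Equiv.Perm (Fin m)) : Equiv.Perm (Fin (m+1)) :=
  (finSuccEquivLast.trans τ.optionCongr).trans finSuccEquivLast.symm

lemma extp_castSucc (τ : Equiv.Perm (Fin m)) (x : Fin m) :
    extp τ (Fin.castSucc x) = Fin.castSucc (τ x) := by
  simp [extp]

lemma extp_last (τ : Equiv.Perm (Fin m)) : extp τ (Fin.last m) = Fin.last m := by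
  simp [extp]

lemma pval_extp (τ : Equiv.Perm (Fin m)) (i : ℕ) (hi : i < m) :
    pval (m+1) (extp τ) i = pval m τ i := by
  have h1 : pval (m+1) (extp τ) i = ((extp τ) ⟨i, by omega⟩).val := dif_pos (by omega)
  have h2 : pval m τ i = (τ ⟨i, hi⟩).val := dif_pos hi
  have h3 : (⟨i, by omega⟩ : Fin (m+1)) = Fin.castSucc ⟨i, hi⟩ := rfl
  rw [h1, h2, h3, extp_castSucc]
  rfl

lemma pval_extp_last (τ : Equiv.Perm (Fin m)) :
    pval (m+1) (extp τ) m = m := by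
  have h1 : pval (m+1) (extp τ) m = ((extp τ) ⟨m, by omega⟩).val := dif_pos (by omega)
  have h3 : (⟨m, by omega⟩ : Fin (m+1)) = Fin.last m := rfl
  rw [h1, h3, extp_last]
  rfl

lemma extp_sum (τ : Equiv.Perm (Fin m)) (g : ℕ → ℕ) :
    (∑ i ∈ range m, if pval (m+1) (extp τ) (i+1) < pval (m+1) (extp τ) i then g i else 0)
      = ∑ i ∈ range (m-1), if pval m τ (i+1) < pval m τ i then g i else 0 := by
  rcases m with _ | M
  · simp
  · rw [Finset.sum_range_succ, Nat.succ_sub_one]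
    have hlast : ¬ (pval (M+1+1) (extp τ) (M+1) < pval (M+1+1) (extp τ) M) := by
      rw [pval_extp_last τ, pval_extp τ M (by omega)]
      have := pval_lt_bound (M+1) τ M (by omega)
      omega
    rw [if_neg hlast, add_zero]
    apply Finset.sum_congr rfl
    intro i hi
    have hi' : i < M := Finset.mem_range.mp hi
    rw [pval_extp τ i (by omega), pval_extp τ (i+1) (by omega)]

lemma maj_extp (τ : Equiv.Perm (Fin m)) : maj (m+1) (extp τ) = maj m τ := by
  have t1 := descPairs_sum (m+1) (extp τ) (fun i => i + 1)
  have t2 := descPairs_sum m τ (fun i => i + 1)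
  simp only [Nat.add_sub_cancel] at t1
  rw [maj, maj, t1, t2, extp_sum]

lemma W_extp (τ : Equiv.Perm (Fin m)) : Wn (m+1) (extp τ) = Wn m τ + maj m τ := by
  have t1 := descPairs_sum (m+1) (extp τ) (fun i => (m + 1 - i) * (i + 1))
  have t2 := descPairs_sum m τ (fun i => (m - i) * (i + 1))
  have t3 := descPairs_sum m τ (fun i => i + 1)
  simp only [Nat.add_sub_cancel] at t1
  rw [Wn, Wn, maj, t1, t2, t3, extp_sum]
  rw [← Finset.sum_add_distrib]
  apply Finset.sum_congr rfl
  intro i hi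
  have hi' : i < m - 1 := Finset.mem_range.mp hi
  split_ifs
  · have h1 : m + 1 - i = (m - i) + 1 := by omega
    rw [h1]; ring
  · simp

lemma inv_extp (τ : Equiv.Perm (Fin m)) : inv (m+1) (extp τ) = inv m τ := by
  rw [inv_eq, inv_eq, Finset.sum_range_succ]
  have hlastrow : (∑ b ∈ range (m+1),
      if m < b ∧ pval (m+1) (extp τ) b < pval (m+1) (extp τ) m then (1:ℕ) else 0) = 0 := by
    apply Finset.sum_eq_zero
    intro b hb
    have := Finset.mem_range.mp hb
    exact if_neg (fun h => by omega)
  rw [hlastrow, add_zero]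
  apply Finset.sum_congr rfl
  intro a ha
  have ha' : a < m := Finset.mem_range.mp ha
  rw [Finset.sum_range_succ]
  have hlastcol : (if a < m ∧ pval (m+1) (extp τ) m < pval (m+1) (extp τ) a then (1:ℕ) else 0) = 0 := by
    apply if_neg
    rintro ⟨-, h⟩
    rw [pval_extp_last τ, pval_extp τ a ha'] at h
    have := pval_lt_bound m τ a (by omega)
    omega
  rw [hlastcol, add_zero]
  apply Finset.sum_congr rfl
  intro b hb
  have hb' : b < m := Finset.mem_range.mp hb
  rw [pval_extp τ a ha', pval_extp τ b hb']

end Extension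

section Nonneg

lemma cnt_le_w (N v C : ℕ) :
    (∑ i ∈ range N, if i ≤ v then C else 0) = min N (v+1) * C := by
  induction N with
  | zero => simp
  | succ M ih =>
    rw [Finset.sum_range_succ, ih]
    rcases le_or_gt M v with h | h
    · rw [if_pos h, min_eq_left (by omega), min_eq_left (by omega)]
      ring
    · rw [if_neg (by omega), min_eq_right (by omega), min_eq_right (by omega), add_zero]

lemma count_pairs (N d : ℕ) :
    (Finset.univ.filter (fun p : Fin N × Fin N => p.1.val ≤ d ∧ d < p.2.val)).card
      = min N (d+1) * (N - (d+1)) := by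
  classical
  rw [Finset.card_filter, Fintype.sum_prod_type]
  have h1 : ∀ a : Fin N,
      (∑ b : Fin N, if (a, b).1.val ≤ d ∧ d < (a, b).2.val then (1:ℕ) else 0)
        = (fun i : ℕ => if i ≤ d then (N - (d+1)) else 0) a.val := by
    intro a
    simp only
    by_cases hA : a.val ≤ d
    · rw [if_pos hA]
      have : ∀ b : Fin N, (if a.val ≤ d ∧ d < b.val then (1:ℕ) else 0)
          = (fun j : ℕ => if d < j then (1:ℕ) else 0) b.val := by
        intro b
        exact if_congr (and_iff_right hA) rfl rfl
      rw [Finset.sum_congr rfl (fun b _ => this b),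
        Fin.sum_univ_eq_sum_range (fun j : ℕ => if d < j then (1:ℕ) else 0) N, cnt_gt]
    · rw [if_neg hA]
      apply Finset.sum_eq_zero
      intro b _
      exact if_neg (fun h => hA h.1)
  rw [Finset.sum_congr rfl (fun a _ => h1 a),
    Fin.sum_univ_eq_sum_range (fun i : ℕ => if i ≤ d then (N - (d+1)) else 0) N, cnt_le_w]

lemma exists_desc (N : ℕ) (σ : Equiv.Perm (Fin N)) (a b : ℕ) (hab : a < b) (hb : b ≤ N)
    (hinv : pval N σ b < pval N σ a) :
    ∃ k, a ≤ k ∧ k < b ∧ pval N σ (k+1) < pval N σ k := by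
  by_contra hcon
  push_neg at hcon
  have mono : ∀ t, a ≤ t → t ≤ b → pval N σ a ≤ pval N σ t := by
    intro t ht
    induction t, ht using Nat.le_induction with
    | base => intro _; exact le_refl _
    | succ t ht ih =>
      intro htb
      have h1 := ih (by omega)
      have h2 := hcon t ht (by omega)
      omega
  have := mono b (by omega) (le_refl _)
  omega

lemma inv_le_Wn (N : ℕ) (σ : Equiv.Perm (Fin N)) : inv N σ ≤ Wn N σ := by
  classical
  set D := (range (N-1)).filter (fun i => pval N σ (i+1) < pval N σ i) with hD
  have hW : Wn N σ = ∑ d ∈ D, (N - d) * (d + 1) := by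
    rw [Wn, descPairs_sum N σ (fun i => (N - i) * (i + 1)), hD]
    exact (Finset.sum_filter _ _).symm
  set F : Fin N × Fin N → ℕ := fun p =>
    if h : ∃ k, p.1.val ≤ k ∧ k < p.2.val ∧ pval N σ (k+1) < pval N σ k then Nat.find h else 0
    with hF
  have hex : ∀ p : Fin N × Fin N, (p.1 < p.2 ∧ σ p.2 < σ p.1) →
      ∃ k, p.1.val ≤ k ∧ k < p.2.val ∧ pval N σ (k+1) < pval N σ k := by
    rintro p ⟨h1, h2⟩
    apply exists_desc N σ p.1.val p.2.val (Fin.lt_def.mp h1) (le_of_lt p.2.isLt)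
    rw [pval_val, pval_val]
    exact Fin.lt_def.mp h2
  have hmap : ∀ p ∈ (Finset.univ.filter
      (fun p : Fin N × Fin N => p.1 < p.2 ∧ σ p.2 < σ p.1)), F p ∈ D := by
    intro p hp
    have hp' := (Finset.mem_filter.mp hp).2
    have he := hex p hp'
    have hspec := Nat.find_spec he
    rw [hF]
    simp only
    rw [dif_pos he]
    rw [hD, Finset.mem_filter, Finset.mem_range]
    have := p.2.isLt
    exact ⟨by omega, hspec.2.2⟩
  rw [inv, Finset.card_eq_sum_card_fiberwise hmap, hW]
  apply Finset.sum_le_sum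
  intro d hd
  have hd' : d < N - 1 := Finset.mem_range.mp (Finset.mem_filter.mp hd).1
  have hsub : ((Finset.univ.filter
      (fun p : Fin N × Fin N => p.1 < p.2 ∧ σ p.2 < σ p.1)).filter (fun p => F p = d))
      ⊆ Finset.univ.filter (fun p : Fin N × Fin N => p.1.val ≤ d ∧ d < p.2.val) := by
    intro p hp
    rw [Finset.mem_filter] at hp
    obtain ⟨hpI, hFd⟩ := hp
    have hp' := (Finset.mem_filter.mp hpI).2
    have he := hex p hp'
    rw [hF] at hFd
    simp only at hFd
    rw [dif_pos he] at hFd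
    have hspec := Nat.find_spec he
    rw [hFd] at hspec
    rw [Finset.mem_filter]
    exact ⟨Finset.mem_univ _, hspec.1, by omega⟩
  calc ((Finset.univ.filter
      (fun p : Fin N × Fin N => p.1 < p.2 ∧ σ p.2 < σ p.1)).filter (fun p => F p = d)).card
      ≤ (Finset.univ.filter (fun p : Fin N × Fin N => p.1.val ≤ d ∧ d < p.2.val)).card :=
        Finset.card_le_card hsub
    _ = min N (d+1) * (N - (d+1)) := count_pairs N d
    _ ≤ (N - d) * (d + 1) := by
        rw [min_eq_right (by omega : d + 1 ≤ N), mul_comm]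
        exact Nat.mul_le_mul_right _ (by omega)

end Nonneg

section Orbit

variable {m : ℕ}

open Fin.NatCast Fin.CommRing

lemma crot_pow (k : ℕ) : ∀ x : Fin (m+1),
    ((finRotate (m+1))^k) x = x + (k : Fin (m+1)) := by
  induction k with
  | zero => intro x; simp
  | succ k ih =>
    intro x
    rw [pow_succ, Equiv.Perm.mul_apply, finRotate_succ_apply, ih]
    push_cast
    ring

lemma crot_pow_self : (finRotate (m+1))^(m+1) = 1 := by
  apply Equiv.ext
  intro x
  rw [crot_pow, Fin.natCast_self, add_zero, Equiv.Perm.one_apply]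

lemma orbit (τ : Equiv.Perm (Fin m)) (j : ℕ) (hj : j ≤ m) :
    maj (m+1) ((finRotate (m+1))^(m+1-j) * extp τ) = maj (m+1) (extp τ) + j ∧
    Wn (m+1) ((finRotate (m+1))^(m+1-j) * extp τ) + inv (m+1) (extp τ)
      = Wn (m+1) (extp τ) + inv (m+1) ((finRotate (m+1))^(m+1-j) * extp τ) + j := by
  induction j with
  | zero =>
    rw [Nat.sub_zero, crot_pow_self, one_mul]
    omega
  | succ j ih =>
    have hj' : j ≤ m := by omega
    have hij := ih hj'
    have hexp2 : m + 1 - (j+1) = m - j := by omega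
    have hmul : finRotate (m+1) * ((finRotate (m+1))^(m-j) * extp τ)
        = (finRotate (m+1))^(m+1-j) * extp τ := by
      rw [← mul_assoc, ← pow_succ']
      congr 2
      omega
    have hlast : ((finRotate (m+1))^(m-j) * extp τ) (Fin.last m) ≠ Fin.last m := by
      rw [Equiv.Perm.mul_apply, extp_last, crot_pow]
      intro h
      have hv := congrArg Fin.val h
      rw [Fin.val_add, Fin.val_last, Fin.val_natCast] at hv
      have h1 : (m - j) % (m+1) = m - j := Nat.mod_eq_of_lt (by omega)
      rw [h1] at hv
      have h2 : m + (m - j) = (m+1) + (m - j - 1) := by omega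
      rw [h2, Nat.add_mod_left, Nat.mod_eq_of_lt (by omega)] at hv
      omega
    have hpv : pvpos m ((finRotate (m+1))^(m-j) * extp τ) ≠ m := by
      intro h
      apply hlast
      have h1 : (((finRotate (m+1))^(m-j) * extp τ)⁻¹ (Fin.last m)) = Fin.last m :=
        Fin.ext (by rw [Fin.val_last]; exact h)
      conv_lhs => rw [← h1]
      exact Equiv.apply_symm_apply _ _
    have h1 := SL_maj' ((finRotate (m+1))^(m-j) * extp τ) hpv
    have h2 := SL4 ((finRotate (m+1))^(m-j) * extp τ)
    rw [hmul] at h1 h2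
    rw [hexp2]
    omega

end Orbit

section Final

open MvPolynomial

variable {m : ℕ}

def bij (m : ℕ) : Equiv.Perm (Fin m) × Fin (m+1) → Equiv.Perm (Fin (m+1)) :=
  fun p => (finRotate (m+1))^(m+1-p.2.val) * extp p.1

lemma bij_last (τ : Equiv.Perm (Fin m)) (j : Fin (m+1)) :
    (bij m (τ, j)) (Fin.last m) = ⟨m - j.val, by omega⟩ := by
  have hj : j.val ≤ m := by have := j.isLt; omega
  rw [bij]
  simp only
  rw [Equiv.Perm.mul_apply, extp_last, crot_pow]
  apply Fin.ext
  rw [Fin.val_add, Fin.val_last, Fin.val_natCast]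
  simp only
  rcases Nat.eq_zero_or_pos j.val with h | h
  · rw [h]
    have h1 : (m + 1 - 0) % (m + 1) = 0 := by
      rw [Nat.sub_zero, Nat.mod_self]
    rw [h1, Nat.add_zero, Nat.mod_eq_of_lt (by omega)]
    omega
  · have h1 : (m + 1 - j.val) % (m + 1) = m + 1 - j.val := Nat.mod_eq_of_lt (by omega)
    rw [h1]
    have h2 : m + (m + 1 - j.val) = (m + 1) + (m - j.val) := by omega
    rw [h2, Nat.add_mod_left, Nat.mod_eq_of_lt (by omega)]

lemma bij_inj : Function.Injective (bij m) := by
  rintro ⟨τ, j⟩ ⟨τ', j'⟩ h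
  have hlast : (⟨m - j.val, by omega⟩ : Fin (m+1)) = ⟨m - j'.val, by omega⟩ := by
    rw [← bij_last τ j, ← bij_last τ' j', h]
  have hj : j.val ≤ m := by have := j.isLt; omega
  have hj' : j'.val ≤ m := by have := j'.isLt; omega
  have hvv : m - j.val = m - j'.val := congrArg Fin.val hlast
  have hjj : j = j' := Fin.ext (by omega)
  subst hjj
  have hext : extp τ = extp τ' := by
    have := h
    rw [bij, bij] at this
    simp only at this
    exact mul_left_cancel this
  have htau : τ = τ' := by
    apply Equiv.ext
    intro x
    have h1 : Fin.castSucc (τ x) = Fin.castSucc (τ' x) := by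
      rw [← extp_castSucc τ x, ← extp_castSucc τ' x, hext]
    exact Fin.castSucc_injective m h1
  rw [htau]

lemma bij_stats (τ : Equiv.Perm (Fin m)) (j : Fin (m+1)) :
    maj (m+1) (bij m (τ, j)) = maj m τ + j.val ∧
    siz (m+1) (bij m (τ, j)) = siz m τ + maj m τ + j.val := by
  have hj : j.val ≤ m := by have := j.isLt; omega
  obtain ⟨h1, h2⟩ := orbit τ j.val hj
  have hmaj := maj_extp τ
  have hW := W_extp τ
  have hinv := inv_extp τ
  have hnn := inv_le_Wn m τ
  have hb : bij m (τ, j) = (finRotate (m+1))^(m+1-j.val) * extp τ := rfl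
  constructor
  · rw [hb, h1, hmaj]
  · rw [hb, siz_eq, siz_eq]
    omega

theorem keyThm (n : ℕ) :
    (∑ σ : Equiv.Perm (Fin n),
        (MvPolynomial.X 0 : MvPolynomial (Fin 2) ℤ) ^ siz n σ *
          MvPolynomial.X 1 ^ maj n σ)
      = ∏ k ∈ Finset.Icc 1 n, ∑ j ∈ Finset.range k,
          ((MvPolynomial.X 0 : MvPolynomial (Fin 2) ℤ) ^ (n + 1 - k) *
            MvPolynomial.X 1) ^ j := by
  induction n with
  | zero =>
    have h0 : (∑ σ : Equiv.Perm (Fin 0),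
        (X 0 : MvPolynomial (Fin 2) ℤ) ^ siz 0 σ * X 1 ^ maj 0 σ)
        = ∑ _σ : Equiv.Perm (Fin 0), (1 : MvPolynomial (Fin 2) ℤ) := by
      apply Finset.sum_congr rfl
      intro σ _
      have hu : (Finset.univ : Finset (Fin 0 × Fin 0)) = ∅ := Finset.univ_eq_empty
      have hmaj : maj 0 σ = 0 := by rw [maj, descPairs, hu]; simp
      have hsiz : siz 0 σ = 0 := by rw [siz, descPairs, hu]; simp
      rw [hmaj, hsiz, pow_zero, pow_zero, mul_one]
    rw [h0, Finset.sum_const, Finset.card_univ]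
    have hcard : Fintype.card (Equiv.Perm (Fin 0)) = 1 := by
      rw [Fintype.card_perm, Fintype.card_fin]
      rfl
    rw [hcard, one_smul,
      show Finset.Icc 1 0 = ∅ from Finset.Icc_eq_empty (by omega), Finset.prod_empty]
  | succ m ih =>
    have hbij : Function.Bijective (bij m) := by
      rw [Fintype.bijective_iff_injective_and_card]
      refine ⟨bij_inj, ?_⟩
      rw [Fintype.card_prod, Fintype.card_perm, Fintype.card_perm,
        Fintype.card_fin, Fintype.card_fin, Nat.factorial_succ]
      ring
    have hsum := Fintype.sum_bijective (bij m) hbij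
      (fun p : Equiv.Perm (Fin m) × Fin (m+1) =>
        (X 0 : MvPolynomial (Fin 2) ℤ) ^ (siz m p.1 + maj m p.1 + p.2.val)
          * X 1 ^ (maj m p.1 + p.2.val))
      (fun σ => (X 0 : MvPolynomial (Fin 2) ℤ) ^ siz (m+1) σ * X 1 ^ maj (m+1) σ)
      (fun p => by
        obtain ⟨τ, jf⟩ := p
        simp only
        rw [(bij_stats τ jf).1, (bij_stats τ jf).2])
    rw [← hsum, Fintype.sum_prod_type]
    have e1 : ∀ τ : Equiv.Perm (Fin m),
        (∑ jf : Fin (m+1), (X 0 : MvPolynomial (Fin 2) ℤ) ^ (siz m τ + maj m τ + jf.val)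
            * X 1 ^ (maj m τ + jf.val))
          = ∑ j ∈ range (m+1),
              ((X 0 : MvPolynomial (Fin 2) ℤ) ^ (siz m τ) * (X 0 * X 1) ^ (maj m τ))
                * (X 0 * X 1) ^ j := by
      intro τ
      rw [← Fin.sum_univ_eq_sum_range (fun j : ℕ =>
        ((X 0 : MvPolynomial (Fin 2) ℤ) ^ (siz m τ) * (X 0 * X 1) ^ (maj m τ))
          * (X 0 * X 1) ^ j) (m+1)]
      apply Finset.sum_congr rfl
      intro jf _
      ring
    rw [Finset.sum_congr rfl (fun τ _ => e1 τ), ← Finset.sum_mul_sum]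
    have hIH := congrArg (MvPolynomial.bind₁
      (![X 0, X 0 * X 1] : Fin 2 → MvPolynomial (Fin 2) ℤ)) ih
    simp only [map_sum, map_prod, map_mul, map_pow, MvPolynomial.bind₁_X_right,
      Matrix.cons_val_zero, Matrix.cons_val_one, Matrix.head_cons] at hIH
    rw [hIH, Finset.prod_Icc_succ_top (by omega : 1 ≤ m + 1)]
    congr 1
    · apply Finset.prod_congr rfl
      intro k hk
      obtain ⟨hk1, hk2⟩ := Finset.mem_Icc.mp hk
      apply Finset.sum_congr rfl
      intro j _
      congr 1
      have he : m + 1 + 1 - k = (m + 1 - k) + 1 := by omega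
      rw [he, pow_succ]
      ring
    · apply Finset.sum_congr rfl
      intro j _
      congr 1
      have he : m + 1 + 1 - (m + 1) = 1 := by omega
      rw [he, pow_one]

end Final

end Stmt17Aux

/-- `Σ_{σ ∈ S_n} q^{siz(σ)} t^{maj(σ)} = Π_{k=1}^n [k]_{q^{n+1−k} t}`,
with `q = X 0`, `t = X 1`. -/
theorem stmt17 (n : ℕ) (hn : 1 ≤ n) :
    (∑ σ : Equiv.Perm (Fin n),
        (MvPolynomial.X 0 : MvPolynomial (Fin 2) ℤ) ^ siz n σ *
          MvPolynomial.X 1 ^ maj n σ)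
      = ∏ k ∈ Finset.Icc 1 n, ∑ j ∈ Finset.range k,
          ((MvPolynomial.X 0 : MvPolynomial (Fin 2) ℤ) ^ (n + 1 - k) *
            MvPolynomial.X 1) ^ j :=
  Stmt17Aux.keyThm n
end

section
/- Let n ≥ 1. For 2 ≤ k ≤ n let C_k⁻ ∈ S_n be the decreasing k-cycle defined by C_k⁻(1) = k, C_k⁻(i) = i − 1 for 2 ≤ i ≤ k, and C_k⁻(i) = i for i > k. For any sequence (a_2, …, a_n) of integers with 0 ≤ a_i < i for each i, let LD(a) = (C_n⁻)^{a_n} ∘ (C_{n−1}⁻)^{a_{n−1}} ∘ ⋯ ∘ (C_2⁻)^{a_2} ∈ S_n. Then maj(LD(a)) = Σ_{i=2}^{n} a_i and siz(LD(a)) = Σ_{i=2}^{n} (n+1−i)·a_i. -/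
/-- The positive part of `siz`. -/
def Sstat (n : ℕ) (σ : Equiv.Perm (Fin n)) : ℕ :=
  ∑ p ∈ descPairs n σ, (n - p.1.val) * (p.1.val + 1)

lemma siz_eq (n : ℕ) (σ : Equiv.Perm (Fin n)) : siz n σ = Sstat n σ - inv n σ := rfl

lemma maj_eq_sum (n : ℕ) (σ : Equiv.Perm (Fin n)) :
    maj n σ = ∑ p : Fin n × Fin n,
      (if p.2.val = p.1.val + 1 ∧ σ p.2 < σ p.1 then p.1.val + 1 else 0) := by
  rw [maj, descPairs, Finset.sum_filter]

lemma Sstat_eq_sum (n : ℕ) (σ : Equiv.Perm (Fin n)) :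
    Sstat n σ = ∑ p : Fin n × Fin n,
      (if p.2.val = p.1.val + 1 ∧ σ p.2 < σ p.1 then (n - p.1.val) * (p.1.val + 1) else 0) := by
  rw [Sstat, descPairs, Finset.sum_filter]

lemma inv_eq_sum (n : ℕ) (σ : Equiv.Perm (Fin n)) :
    inv n σ = ∑ p : Fin n × Fin n,
      (if p.1 < p.2 ∧ σ p.2 < σ p.1 then 1 else 0) := by
  rw [inv, Finset.card_filter]

lemma maj_one (n : ℕ) : maj n 1 = 0 := by
  rw [maj_eq_sum]
  apply Finset.sum_eq_zero
  rintro ⟨i, j⟩ -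
  simp only [Equiv.Perm.one_apply]
  apply if_neg
  rintro ⟨h1, h2⟩
  rw [Fin.lt_def] at h2
  omega

lemma Sstat_one (n : ℕ) : Sstat n 1 = 0 := by
  rw [Sstat_eq_sum]
  apply Finset.sum_eq_zero
  rintro ⟨i, j⟩ -
  simp only [Equiv.Perm.one_apply]
  apply if_neg
  rintro ⟨h1, h2⟩
  rw [Fin.lt_def] at h2
  omega

lemma inv_perm_one (n : ℕ) : inv n 1 = 0 := by
  rw [inv_eq_sum]
  apply Finset.sum_eq_zero
  rintro ⟨i, j⟩ -
  simp only [Equiv.Perm.one_apply]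
  apply if_neg
  rintro ⟨h1, h2⟩
  exact absurd h2 (asymm h1)

section Step

variable {n m : ℕ}

/-- The key single-multiplication step. -/
lemma step (hm2 : 2 ≤ m) (hmn : m ≤ n)
    (Cm : Equiv.Perm (Fin n))
    (hCm : ∀ i : Fin n, (Cm i).val =
      if i.val = 0 then m - 1 else if i.val < m then i.val - 1 else i.val)
    (τ : Equiv.Perm (Fin n)) (hfix : ∀ i : Fin n, m ≤ i.val → τ i = i)
    (hlast : ∀ hlt : m - 1 < n, (τ ⟨m - 1, hlt⟩).val ≠ 0) :
    maj n (Cm * τ) = maj n τ + 1 ∧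
    Sstat n (Cm * τ) + inv n τ = Sstat n τ + inv n (Cm * τ) + (n + 1 - m) := by
  have hn2 : 2 ≤ n := le_trans hm2 hmn
  obtain ⟨z, hτz⟩ : ∃ z : Fin n, τ z = ⟨0, by omega⟩ :=
    ⟨τ.symm ⟨0, by omega⟩, τ.apply_symm_apply _⟩
  have hz0 : (τ z).val = 0 := by rw [hτz]
  have hzm : z.val + 2 ≤ m := by
    rcases Nat.lt_or_ge z.val m with h1 | h2
    · by_contra h
      push_neg at h
      have hz : z = ⟨m - 1, by omega⟩ := Fin.ext (show z.val = m - 1 by omega)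
      exact hlast (by omega) (by rw [← hz]; exact hz0)
    · have h3 := hfix z h2
      rw [h3] at hz0
      omega
  have hzn : z.val < n := z.isLt
  have hvm : ∀ i : Fin n, i.val < m → (τ i).val < m := by
    intro i hi
    by_contra h
    push_neg at h
    have h2 := τ.injective (hfix (τ i) h)
    rw [h2] at h
    omega
  have hne0 : ∀ i : Fin n, i ≠ z → (τ i).val ≠ 0 := by
    intro i hi h
    exact hi (τ.injective (by rw [hτz]; exact Fin.ext h))
  have hord : ∀ u v : Fin n, u.val ≠ 0 → v.val ≠ 0 →
      ((Cm u).val < (Cm v).val ↔ u.val < v.val) := by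
    intro u v hu hv
    rw [hCm u, hCm v]
    split_ifs <;> omega
  have hC0 : (Cm (τ z)).val = m - 1 := by rw [hτz, hCm]; simp
  have hCsm : ∀ u : Fin n, u.val ≠ 0 → u.val < m → (Cm u).val = u.val - 1 := by
    intro u h1 h2
    rw [hCm, if_neg h1, if_pos h2]
  -- the generic descent-sum identity
  have hdesc : ∀ f : Fin n → ℕ,
      (∑ p : Fin n × Fin n,
        (if p.2.val = p.1.val + 1 ∧ (Cm * τ) p.2 < (Cm * τ) p.1 then f p.1 else 0))
        + (if z.val = 0 then 0 else f ⟨z.val - 1, by omega⟩)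
      = (∑ p : Fin n × Fin n,
        (if p.2.val = p.1.val + 1 ∧ τ p.2 < τ p.1 then f p.1 else 0)) + f z := by
    intro f
    have key : ∀ p : Fin n × Fin n,
        ((if p.2.val = p.1.val + 1 ∧ (Cm * τ) p.2 < (Cm * τ) p.1 then f p.1 else 0)
          + (if p.2.val = z.val ∧ p.2.val = p.1.val + 1 then f p.1 else 0))
        = ((if p.2.val = p.1.val + 1 ∧ τ p.2 < τ p.1 then f p.1 else 0)
          + (if p.1.val = z.val ∧ p.2.val = p.1.val + 1 then f p.1 else 0)) := by
      rintro ⟨i, j⟩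
      simp only [Equiv.Perm.mul_apply, Fin.lt_def]
      by_cases hadj : j.val = i.val + 1
      · by_cases hiz : i = z
        · subst hiz
          have hjm : j.val < m := by omega
          have hjz : j ≠ i := fun h => by rw [h] at hadj; omega
          have h2 : (τ j).val < m := hvm j hjm
          have h3 : (τ j).val ≠ 0 := hne0 j hjz
          have h4 : (Cm (τ j)).val = (τ j).val - 1 := hCsm _ h3 h2
          split_ifs <;> omega
        · by_cases hjz : j = z
          · subst hjz
            have him : i.val < m := by omega
            have h2 : (τ i).val < m := hvm i him
            have h3 : (τ i).val ≠ 0 := hne0 i hiz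
            have h4 : (Cm (τ i)).val = (τ i).val - 1 := hCsm _ h3 h2
            split_ifs <;> omega
          · have hiz' : ¬ i.val = z.val := fun h => hiz (Fin.ext h)
            have hjz' : ¬ j.val = z.val := fun h => hjz (Fin.ext h)
            have hcongr := hord (τ j) (τ i) (hne0 j hjz) (hne0 i hiz)
            split_ifs <;> omega
      · split_ifs <;> omega
    have hsum := Finset.sum_congr rfl (fun (p : Fin n × Fin n) (_ : p ∈ Finset.univ) => key p)
    rw [Finset.sum_add_distrib, Finset.sum_add_distrib] at hsum
    have hL : (∑ p : Fin n × Fin n,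
        (if p.2.val = z.val ∧ p.2.val = p.1.val + 1 then f p.1 else 0))
        = (if z.val = 0 then 0 else f ⟨z.val - 1, by omega⟩) := by
      rcases Nat.eq_zero_or_pos z.val with h0 | h0
      · rw [if_pos h0]
        apply Finset.sum_eq_zero
        rintro ⟨i, j⟩ -
        rw [if_neg]
        rintro ⟨h1, h2⟩
        have h1' : j.val = z.val := h1
        have h2' : j.val = i.val + 1 := h2
        omega
      · rw [if_neg (by omega)]
        have hother : ∀ q : Fin n × Fin n, q ∈ Finset.univ →
            q ≠ (⟨⟨z.val - 1, by omega⟩, z⟩ : Fin n × Fin n) →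
            (if q.2.val = z.val ∧ q.2.val = q.1.val + 1 then f q.1 else 0) = 0 := by
          rintro ⟨i, j⟩ - hne
          rw [if_neg]
          rintro ⟨h1, h2⟩
          have h1' : j.val = z.val := h1
          have h2' : j.val = i.val + 1 := h2
          apply hne
          have hi : i = ⟨z.val - 1, by omega⟩ := Fin.ext (show i.val = z.val - 1 by omega)
          have hj : j = z := Fin.ext h1'
          rw [Prod.mk.injEq]
          exact ⟨hi, hj⟩
        rw [Finset.sum_eq_single_of_mem _ (Finset.mem_univ _) hother,
          if_pos ⟨rfl, show z.val = z.val - 1 + 1 by omega⟩]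
    have hR : (∑ p : Fin n × Fin n,
        (if p.1.val = z.val ∧ p.2.val = p.1.val + 1 then f p.1 else 0)) = f z := by
      have hother : ∀ q : Fin n × Fin n, q ∈ Finset.univ →
          q ≠ (⟨z, ⟨z.val + 1, by omega⟩⟩ : Fin n × Fin n) →
          (if q.1.val = z.val ∧ q.2.val = q.1.val + 1 then f q.1 else 0) = 0 := by
        rintro ⟨i, j⟩ - hne
        rw [if_neg]
        rintro ⟨h1, h2⟩
        have h1' : i.val = z.val := h1
        have h2' : j.val = i.val + 1 := h2
        apply hne
        have hi : i = z := Fin.ext h1'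
        have hj : j = ⟨z.val + 1, by omega⟩ := Fin.ext (show j.val = z.val + 1 by omega)
        rw [Prod.mk.injEq]
        exact ⟨hi, hj⟩
      rw [Finset.sum_eq_single_of_mem _ (Finset.mem_univ _) hother, if_pos ⟨rfl, rfl⟩]
    rw [hL, hR] at hsum
    exact hsum
  constructor
  · -- maj
    have h := hdesc (fun i => i.val + 1)
    simp only [] at h
    rw [← maj_eq_sum, ← maj_eq_sum] at h
    have hc : (if z.val = 0 then 0 else (⟨z.val - 1, by omega⟩ : Fin n).val + 1) = z.val := by
      split_ifs with h0
      · omega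
      · show z.val - 1 + 1 = z.val
        omega
    rw [hc] at h
    omega
  · -- Sstat / inv
    have hS := hdesc (fun i => (n - i.val) * (i.val + 1))
    simp only [] at hS
    rw [← Sstat_eq_sum, ← Sstat_eq_sum] at hS
    have hc2 : (if z.val = 0 then 0
        else (n - (⟨z.val - 1, by omega⟩ : Fin n).val) * ((⟨z.val - 1, by omega⟩ : Fin n).val + 1))
        = (n + 1 - z.val) * z.val := by
      split_ifs with h0
      · simp [h0]
      · show (n - (z.val - 1)) * (z.val - 1 + 1) = (n + 1 - z.val) * z.val
        have e1 : n - (z.val - 1) = n + 1 - z.val := by omega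
        have e2 : z.val - 1 + 1 = z.val := by omega
        rw [e1, e2]
    rw [hc2] at hS
    -- inversion identity
    have hinvkey : ∀ p : Fin n × Fin n,
        ((if p.1 < p.2 ∧ (Cm * τ) p.2 < (Cm * τ) p.1 then 1 else 0)
          + (if p.1.val < p.2.val ∧ p.2.val = z.val then 1 else 0))
        = ((if p.1 < p.2 ∧ τ p.2 < τ p.1 then 1 else 0)
          + (if p.1.val = z.val ∧ p.1.val < p.2.val ∧ p.2.val < m then 1 else 0)) := by
      rintro ⟨i, j⟩
      simp only [Equiv.Perm.mul_apply, Fin.lt_def]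
      by_cases hij : i.val < j.val
      · by_cases hiz : i = z
        · subst hiz
          have hjz : j ≠ i := fun h => by rw [h] at hij; omega
          have h3 : (τ j).val ≠ 0 := hne0 j hjz
          by_cases hjm : j.val < m
          · have h2 : (τ j).val < m := hvm j hjm
            have h4 : (Cm (τ j)).val = (τ j).val - 1 := hCsm _ h3 h2
            split_ifs <;> omega
          · have hτj : τ j = j := hfix j (by omega)
            have h4 : (Cm (τ j)).val = j.val := by
              rw [hτj, hCm, if_neg (by omega), if_neg (by omega)]
            split_ifs <;> omega
        · by_cases hjz : j = z
          · subst hjz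
            have him : i.val < m := by omega
            have h2 : (τ i).val < m := hvm i him
            have h3 : (τ i).val ≠ 0 := hne0 i hiz
            have h4 : (Cm (τ i)).val = (τ i).val - 1 := hCsm _ h3 h2
            split_ifs <;> omega
          · have hiz' : ¬ i.val = z.val := fun h => hiz (Fin.ext h)
            have hjz' : ¬ j.val = z.val := fun h => hjz (Fin.ext h)
            have hcongr := hord (τ j) (τ i) (hne0 j hjz) (hne0 i hiz)
            split_ifs <;> omega
      · split_ifs <;> omega
    have hsum2 := Finset.sum_congr rfl (fun (p : Fin n × Fin n) (_ : p ∈ Finset.univ) =>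
      hinvkey p)
    rw [Finset.sum_add_distrib, Finset.sum_add_distrib] at hsum2
    have hL2 : (∑ p : Fin n × Fin n,
        (if p.1.val < p.2.val ∧ p.2.val = z.val then (1:ℕ) else 0)) = z.val := by
      rw [Fintype.sum_prod_type]
      have hstep1 : ∀ i : Fin n, (∑ j : Fin n,
          (if i.val < j.val ∧ j.val = z.val then (1:ℕ) else 0))
          = (if i.val < z.val then 1 else 0) := by
        intro i
        rw [Finset.sum_eq_single_of_mem z (Finset.mem_univ z)
          (fun j _ hj => if_neg (fun h => hj (Fin.ext h.2)))]
        by_cases hiz : i.val < z.val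
        · rw [if_pos ⟨hiz, rfl⟩, if_pos hiz]
        · rw [if_neg (fun h => hiz h.1), if_neg hiz]
      rw [Finset.sum_congr rfl (fun i _ => hstep1 i), ← Finset.card_filter]
      have he : (Finset.univ.filter fun i : Fin n => i.val < z.val) = Finset.Iio z := by
        ext i
        simp only [Finset.mem_filter, Finset.mem_univ, true_and, Finset.mem_Iio]
        exact Fin.lt_def.symm
      rw [he, Fin.card_Iio]
    have hR2 : (∑ p : Fin n × Fin n,
        (if p.1.val = z.val ∧ p.1.val < p.2.val ∧ p.2.val < m then (1:ℕ) else 0))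
        = m - 1 - z.val := by
      rw [Fintype.sum_prod_type]
      rw [Finset.sum_eq_single_of_mem z (Finset.mem_univ z)
        (fun i _ hi => Finset.sum_eq_zero (fun j _ => if_neg (fun h => hi (Fin.ext h.1))))]
      have hstep2 : ∀ j : Fin n, (if z.val = z.val ∧ z.val < j.val ∧ j.val < m then (1:ℕ) else 0)
          = (if z.val < j.val ∧ j.val < m then 1 else 0) := by
        intro j
        by_cases hh : z.val < j.val ∧ j.val < m
        · rw [if_pos ⟨rfl, hh⟩, if_pos hh]
        · rw [if_neg (fun hhh => hh hhh.2), if_neg hh]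
      rw [Finset.sum_congr rfl (fun j _ => hstep2 j), ← Finset.card_filter]
      have he : (Finset.univ.filter fun j : Fin n => z.val < j.val ∧ j.val < m)
          = Finset.Ioc z ⟨m - 1, by omega⟩ := by
        ext j
        simp only [Finset.mem_filter, Finset.mem_univ, true_and, Finset.mem_Ioc, Fin.lt_def,
          Fin.le_def]
        constructor
        · rintro ⟨h1, h2⟩
          exact ⟨h1, show j.val ≤ m - 1 by omega⟩
        · rintro ⟨h1, h2⟩
          have : j.val ≤ m - 1 := h2
          exact ⟨h1, by omega⟩
      rw [he, Fin.card_Ioc]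
    rw [hL2, hR2, ← inv_eq_sum, ← inv_eq_sum] at hsum2
    -- combine
    have hid : ∀ x y : ℕ, (x + y - x) * (x + 1) + 2 * x = (x + y + 1 - x) * x + (x + y) := by
      intro x y
      rw [Nat.add_sub_cancel_left]
      have e1 : x + y + 1 - x = y + 1 := by omega
      rw [e1]
      ring
    obtain ⟨y, hy⟩ : ∃ y, n = z.val + y := ⟨n - z.val, by omega⟩
    have hid2 := hid z.val y
    rw [← hy] at hid2
    omega

end Step

section Iter

variable {n m : ℕ}

lemma iter (hm2 : 2 ≤ m) (hmn : m ≤ n)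
    (Cm : Equiv.Perm (Fin n))
    (hCm : ∀ i : Fin n, (Cm i).val =
      if i.val = 0 then m - 1 else if i.val < m then i.val - 1 else i.val)
    (σ : Equiv.Perm (Fin n)) (hfix : ∀ i : Fin n, m - 1 ≤ i.val → σ i = i) :
    ∀ t, t ≤ m - 1 →
      (∀ i : Fin n, m ≤ i.val → (Cm ^ t * σ) i = i) ∧
      (∀ hlt : m - 1 < n, ((Cm ^ t * σ) ⟨m - 1, hlt⟩).val = m - 1 - t) ∧
      maj n (Cm ^ t * σ) = maj n σ + t ∧
      Sstat n (Cm ^ t * σ) + inv n σ = Sstat n σ + inv n (Cm ^ t * σ) + (n + 1 - m) * t := by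
  intro t
  induction t with
  | zero =>
    intro _
    rw [pow_zero, one_mul]
    exact ⟨fun i hi => hfix i (by omega),
      fun hlt => by rw [hfix _ (le_refl _)]; rfl, rfl, rfl⟩
  | succ t ih =>
    intro ht
    obtain ⟨ha', hb', hmaj', hS'⟩ := ih (by omega)
    have hmul : Cm ^ (t + 1) * σ = Cm * (Cm ^ t * σ) := by
      rw [pow_succ', mul_assoc]
    have hstep := step hm2 hmn Cm hCm (Cm ^ t * σ) ha'
      (fun hlt => by rw [hb' hlt]; omega)
    rw [← hmul] at hstep
    refine ⟨?_, ?_, ?_, ?_⟩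
    · intro i hi
      rw [hmul, Equiv.Perm.mul_apply, ha' i hi]
      apply Fin.ext
      rw [hCm i, if_neg (by omega), if_neg (by omega)]
    · intro hlt
      rw [hmul, Equiv.Perm.mul_apply]
      have hv := hb' hlt
      rw [hCm, hv, if_neg (by omega), if_pos (by omega)]
      omega
    · rw [hstep.1, hmaj']
      omega
    · have h2 := hstep.2
      have hmm : (n + 1 - m) * (t + 1) = (n + 1 - m) * t + (n + 1 - m) := by ring
      rw [hmm]
      omega

end Iter

/-- for the decreasing cycles `C k` (in 1-indexed terms `C_k(1) = k`,
`C_k(i) = i−1` for `2 ≤ i ≤ k`, `C_k(i) = i` for `i > k`; here written 0-indexed on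
`Fin n`) and any `0 ≤ a_i < i`, the left-decreasing factorization
`LD(a) = C_n^{a_n} ∘ ⋯ ∘ C_2^{a_2}` satisfies `maj(LD(a)) = Σ a_i` and
`siz(LD(a)) = Σ (n+1−i)·a_i`. -/
theorem stmt18 (n : ℕ) (hn : 1 ≤ n) (C : ℕ → Equiv.Perm (Fin n))
    (hC : ∀ k, 2 ≤ k → k ≤ n → ∀ i : Fin n,
      ((C k) i).val = if i.val = 0 then k - 1 else if i.val < k then i.val - 1 else i.val)
    (a : ℕ → ℕ) (ha : ∀ i, 2 ≤ i → i ≤ n → a i < i) :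
    maj n (((List.range (n - 1)).map fun j => C (n - j) ^ a (n - j)).prod)
        = ∑ i ∈ Finset.Icc 2 n, a i ∧
    siz n (((List.range (n - 1)).map fun j => C (n - j) ^ a (n - j)).prod)
        = ∑ i ∈ Finset.Icc 2 n, (n + 1 - i) * a i := by
  have main : ∀ k, 1 ≤ k → k ≤ n →
      (∀ i : Fin n, k ≤ i.val →
        (((List.range (k - 1)).map fun j => C (k - j) ^ a (k - j)).prod) i = i) ∧
      maj n (((List.range (k - 1)).map fun j => C (k - j) ^ a (k - j)).prod)
        = ∑ i ∈ Finset.Icc 2 k, a i ∧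
      Sstat n (((List.range (k - 1)).map fun j => C (k - j) ^ a (k - j)).prod)
        = inv n (((List.range (k - 1)).map fun j => C (k - j) ^ a (k - j)).prod)
          + ∑ i ∈ Finset.Icc 2 k, (n + 1 - i) * a i := by
    intro k hk
    induction k, hk using Nat.le_induction with
    | base =>
      intro _
      have hemp : Finset.Icc 2 1 = (∅ : Finset ℕ) := Finset.Icc_eq_empty (by omega)
      simp only [Nat.sub_self, List.range_zero, List.map_nil, List.prod_nil, hemp,
        Finset.sum_empty]
      exact ⟨fun i _ => Equiv.Perm.one_apply i, maj_one n,
        by rw [Sstat_one, inv_perm_one]; rfl⟩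
    | succ k hk ih =>
      intro hkn
      obtain ⟨hfixk, hmajk, hSk⟩ := ih (by omega)
      have hsplit : ((List.range ((k + 1) - 1)).map fun j => C ((k + 1) - j) ^ a ((k + 1) - j)).prod
          = C (k + 1) ^ a (k + 1)
            * ((List.range (k - 1)).map fun j => C (k - j) ^ a (k - j)).prod := by
        have h1 : (k + 1) - 1 = k := by omega
        rw [h1]
        obtain ⟨k', rfl⟩ : ∃ k', k = k' + 1 := ⟨k - 1, by omega⟩
        rw [List.range_succ_eq_map, List.map_cons, List.prod_cons, List.map_map]
        congr 1
        refine congrArg List.prod (List.map_congr_left ?_)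
        intro j _
        simp only [Function.comp_apply, Nat.succ_sub_succ_eq_sub]
      set σk := ((List.range (k - 1)).map fun j => C (k - j) ^ a (k - j)).prod with hσk
      have hiter := iter (m := k + 1) (by omega) hkn (C (k + 1)) (hC (k + 1) (by omega) hkn)
        σk (by simpa using hfixk) (a (k + 1))
        (by have := ha (k + 1) (by omega) hkn; omega)
      obtain ⟨hfa, hfb, hfmaj, hfS⟩ := hiter
      rw [hsplit]
      refine ⟨fun i hi => hfa i hi, ?_, ?_⟩
      · rw [hfmaj, hmajk, Finset.sum_Icc_succ_top (by omega : 2 ≤ k + 1)]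
      · rw [Finset.sum_Icc_succ_top (by omega : 2 ≤ k + 1)]
        have hq : n + 1 - (k + 1) = n - k := by omega
        rw [hq] at hfS ⊢
        generalize hg : (n - k) * a (k + 1) = Q at hfS ⊢
        omega
  obtain ⟨_, hmaj, hS⟩ := main n hn (le_refl n)
  refine ⟨hmaj, ?_⟩
  rw [siz_eq]
  omega
end
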